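/- arXiv:1812.04476 — 6 statements merged into one kernel-verified Lean document; each statement's English description precedes it below -/
import Mathlib

section
/- For every scale parameter c > 0 and every real ω, the characteristic function of the Lévy distribution with location 0 and scale c satisfies ∫₀^∞ exp(i ω t) · √(c/(2π t³)) · exp(−c/(2t)) dt = exp(−√(c·|ω|) + i · sgn(ω) · √(c·|ω|)), where sgn(ω) is the sign of ω (and the integral is a complex-valued Lebesgue/improper integral). -/
open MeasureTheory Set Real Filter Complex Metric

/-- The Lévy density with location 0 and scale `c`. -/
noncomputable def levyPDF (c x : ℝ) : ℝ :=
  if 0 < x then Real.sqrt (c / (2 * Real.pi * x ^ 3)) * Real.exp (-c / (2 * x)) else 0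

-- step 0: integrability
lemma levyAux_t_exp_le {t : ℝ} (ht : 0 ≤ t) : t * Real.exp (-t) ≤ 1 := by
  rw [Real.exp_neg, mul_inv_le_iff₀ (Real.exp_pos t), one_mul]
  exact (Real.add_one_le_exp t).trans' (by linarith)

lemma levyAux_integrableOn_cexp {β : ℂ} (hβ : 0 ≤ β.re) :
    IntegrableOn (fun x : ℝ => Complex.exp (-x^2 - β/x^2)) (Ioi 0) := by
  have hmeas : AEStronglyMeasurable (fun x : ℝ => Complex.exp (-x^2 - β/x^2))
      (volume.restrict (Ioi 0)) := by
    apply ContinuousOn.aestronglyMeasurable ?_ measurableSet_Ioi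
    apply Continuous.comp_continuousOn Complex.continuous_exp
    apply ContinuousOn.sub (by fun_prop)
    exact continuousOn_const.div (by fun_prop) (fun x hx => by
      simpa using pow_ne_zero 2 (ne_of_gt (mem_Ioi.mp hx)))
  refine Integrable.mono ((integrable_exp_neg_mul_sq one_pos).integrableOn) hmeas ?_
  filter_upwards [ae_restrict_mem measurableSet_Ioi] with x hx
  have hx0 : (0:ℝ) < x := hx
  rw [Complex.norm_exp]
  have hre : (-(x:ℂ)^2 - β/(x:ℂ)^2).re = -x^2 - β.re/x^2 := by
    have : ((x:ℂ))^2 = ((x^2 : ℝ) : ℂ) := by push_cast; ring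
    rw [this, Complex.sub_re, Complex.div_ofReal_re]
    simp [← Complex.ofReal_pow]
  rw [hre]
  have h1 : -x^2 - β.re/x^2 ≤ -(1*x^2) := by
    have : 0 ≤ β.re / x^2 := div_nonneg hβ (by positivity)
    nlinarith
  simpa using Real.exp_le_exp.mpr h1

lemma levyAux_rexp_eq (b x : ℝ) :
    Complex.exp (-(x:ℂ)^2 - (b:ℂ)/(x:ℂ)^2) = ((Real.exp (-x^2 - b/x^2) : ℝ) : ℂ) := by
  rw [Complex.ofReal_exp]; congr 1; push_cast; ring

lemma levyAux_integrableOn_rexp {b : ℝ} (hb : 0 ≤ b) :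
    IntegrableOn (fun x : ℝ => Real.exp (-x^2 - b/x^2)) (Ioi 0) := by
  have hmeas : AEStronglyMeasurable (fun x : ℝ => Real.exp (-x^2 - b/x^2))
      (volume.restrict (Ioi 0)) := by
    apply ContinuousOn.aestronglyMeasurable ?_ measurableSet_Ioi
    apply Real.continuous_exp.comp_continuousOn
    apply ContinuousOn.sub (by fun_prop)
    exact continuousOn_const.div (by fun_prop) (fun x hx => by
      simpa using pow_ne_zero 2 (ne_of_gt (mem_Ioi.mp hx)))
  refine Integrable.mono ((integrable_exp_neg_mul_sq one_pos).integrableOn) hmeas ?_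
  filter_upwards [ae_restrict_mem measurableSet_Ioi] with x hx
  have hx0 : (0:ℝ) < x := hx
  rw [Real.norm_eq_abs, Real.abs_exp, Real.norm_eq_abs, Real.abs_exp, Real.exp_le_exp]
  have : 0 ≤ b / x^2 := div_nonneg hb (by positivity)
  nlinarith

lemma levyAux_integrableOn_rexp' {b : ℝ} (hb : 0 < b) :
    IntegrableOn (fun x : ℝ => Real.sqrt b / x^2 * Real.exp (-x^2 - b/x^2)) (Ioi 0) := by
  have hmeas : AEStronglyMeasurable
      (fun x : ℝ => Real.sqrt b / x^2 * Real.exp (-x^2 - b/x^2))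
      (volume.restrict (Ioi 0)) := by
    apply ContinuousOn.aestronglyMeasurable ?_ measurableSet_Ioi
    have hne : ∀ x ∈ Ioi (0:ℝ), x^2 ≠ 0 := fun x hx => by
      simpa using pow_ne_zero 2 (ne_of_gt (mem_Ioi.mp hx))
    apply ContinuousOn.mul (continuousOn_const.div (by fun_prop) hne)
    apply Real.continuous_exp.comp_continuousOn
    exact ContinuousOn.sub (by fun_prop) (continuousOn_const.div (by fun_prop) hne)
  refine Integrable.mono (((integrable_exp_neg_mul_sq one_pos).const_mul
    (Real.sqrt b / b)).integrableOn) hmeas ?_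
  filter_upwards [ae_restrict_mem measurableSet_Ioi] with x hx
  have hx0 : (0:ℝ) < x := hx
  have hxx : (0:ℝ) < x^2 := by positivity
  rw [Real.norm_eq_abs, Real.norm_eq_abs]
  have h1 : 0 ≤ Real.sqrt b / x^2 * Real.exp (-x^2 - b/x^2) := by positivity
  rw [_root_.abs_of_nonneg h1, _root_.abs_of_nonneg (by positivity)]
  have key : b / x^2 * Real.exp (-(b / x^2)) ≤ 1 := levyAux_t_exp_le (by positivity)
  have hexp : Real.exp (-x^2 - b/x^2) = Real.exp (-(b/x^2)) * Real.exp (-x^2) := by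
    rw [← Real.exp_add]; ring_nf
  rw [hexp, show (-1 : ℝ)*x^2 = -x^2 by ring]
  have h2 : Real.sqrt b / x ^ 2 * (Real.exp (-(b / x^2)) * Real.exp (-x ^ 2))
      = (Real.sqrt b / b) * (b / x^2 * Real.exp (-(b/x^2))) * Real.exp (-x^2) := by
    field_simp
  rw [h2]
  have h3 : 0 ≤ Real.sqrt b / b := by positivity
  nlinarith [Real.exp_pos (-x^2), mul_le_of_le_one_right h3 key,
    mul_le_mul_of_nonneg_right (mul_le_of_le_one_right h3 key) (Real.exp_pos (-x^2)).le]

-- substitution (a) : x ↦ √b / x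
lemma levyAux_sub_a {b : ℝ} (hb : 0 < b) :
    ∫ x in Ioi (0:ℝ), Real.exp (-x^2 - b/x^2)
      = ∫ x in Ioi (0:ℝ), Real.sqrt b / x^2 * Real.exp (-x^2 - b/x^2) := by
  have hsb : 0 < Real.sqrt b := Real.sqrt_pos.mpr hb
  have himg : (fun x : ℝ => Real.sqrt b / x) '' (Ioi 0) = Ioi 0 := by
    ext y; constructor
    · rintro ⟨x, hx, rfl⟩; exact div_pos hsb hx
    · intro hy; exact ⟨Real.sqrt b / y, div_pos hsb hy, by
        field_simp⟩
  have hderiv : ∀ x ∈ Ioi (0:ℝ), HasDerivWithinAt (fun x : ℝ => Real.sqrt b / x)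
      (-Real.sqrt b / x^2) (Ioi 0) x := by
    intro x hx
    have hx0 : x ≠ 0 := ne_of_gt hx
    have := (hasDerivAt_inv hx0).const_mul (Real.sqrt b)
    simpa [div_eq_mul_inv, neg_div, mul_div_assoc] using this.hasDerivWithinAt
  have hinj : InjOn (fun x : ℝ => Real.sqrt b / x) (Ioi 0) := by
    intro x hx y hy h
    have hx0 : x ≠ 0 := ne_of_gt hx
    have hy0 : y ≠ 0 := ne_of_gt hy
    simp only at h
    have : Real.sqrt b / x * x * y = Real.sqrt b / y * y * x := by rw [h]; ring
    field_simp at this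
    exact this.symm
  have := integral_image_eq_integral_abs_deriv_smul measurableSet_Ioi hderiv hinj
    (fun x : ℝ => Real.exp (-x^2 - b/x^2))
  rw [himg] at this
  rw [this]
  apply setIntegral_congr_fun measurableSet_Ioi
  intro x hx
  have hx0 : (0:ℝ) < x := hx
  have h1 : (Real.sqrt b / x)^2 = b / x^2 := by
    rw [div_pow, Real.sq_sqrt hb.le]
  have h2 : b / (b / x^2) = x^2 := by
    field_simp
  simp only [smul_eq_mul]
  rw [h1, h2, abs_of_nonpos (div_nonpos_of_nonpos_of_nonneg (neg_nonpos.mpr hsb.le) (sq_nonneg x))]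
  ring_nf

/-- The Glasser-type real integral. -/
lemma levyAux_real_formula {b : ℝ} (hb : 0 ≤ b) :
    ∫ x in Ioi (0:ℝ), Real.exp (-x^2 - b/x^2)
      = Real.sqrt Real.pi / 2 * Real.exp (-2 * Real.sqrt b) := by
  rcases eq_or_lt_of_le hb with rfl | hb
  · have : ∀ x ∈ Ioi (0:ℝ), Real.exp (-x^2 - 0/x^2) = Real.exp (-1*x^2) := by
      intro x hx; norm_num
    rw [setIntegral_congr_fun measurableSet_Ioi this, integral_gaussian_Ioi]
    simp [Real.sqrt_eq_zero']
  · -- b > 0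
    have hsb : 0 < Real.sqrt b := Real.sqrt_pos.mpr hb
    set f : ℝ → ℝ := fun x => x - Real.sqrt b / x with hf
    have himg : f '' (Ioi 0) = univ := by
      apply eq_univ_of_forall
      intro u
      set s := Real.sqrt (u^2 + 4*Real.sqrt b) with hs
      have hs2 : s^2 = u^2 + 4*Real.sqrt b := Real.sq_sqrt (by positivity)
      have hsu : |u| < s := by
        have : |u| = Real.sqrt (u^2) := (Real.sqrt_sq_eq_abs u).symm
        rw [this, hs]
        exact Real.sqrt_lt_sqrt (sq_nonneg u) (by linarith)
      set x := (u + s)/2 with hx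
      have hxpos : 0 < x := by
        have := neg_abs_le u
        rw [hx]; linarith
      refine ⟨x, hxpos, ?_⟩
      have hxq : x^2 = u*x + Real.sqrt b := by
        rw [hx]; nlinarith [hs2]
      show x - Real.sqrt b / x = u
      field_simp
      linarith [hxq]
    have hderiv : ∀ x ∈ Ioi (0:ℝ), HasDerivWithinAt f (1 + Real.sqrt b / x^2) (Ioi 0) x := by
      intro x hx
      have hx0 : x ≠ 0 := ne_of_gt hx
      have h1 := (hasDerivAt_inv hx0).const_mul (Real.sqrt b)
      have h2 := (hasDerivAt_id x).sub h1
      have : 1 - Real.sqrt b * -(x^2)⁻¹ = 1 + Real.sqrt b / x^2 := by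
        field_simp
        ring
      rw [this] at h2
      exact (h2.congr_deriv rfl).hasDerivWithinAt.congr
        (fun y hy => by simp [hf, div_eq_mul_inv]) (by simp [hf, div_eq_mul_inv])
    have hinj : InjOn f (Ioi 0) := by
      have : StrictMonoOn f (Ioi 0) := by
        intro x hx y hy hxy
        have hx0 : (0:ℝ) < x := hx
        have hy0 : (0:ℝ) < y := hy
        have : Real.sqrt b / y < Real.sqrt b / x :=
          div_lt_div_of_pos_left hsb hx0 hxy
        simp only [hf]; linarith
      exact this.injOn
    have key := integral_image_eq_integral_abs_deriv_smul measurableSet_Ioi hderiv hinj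
      (fun u : ℝ => Real.exp (-u^2))
    rw [himg] at key
    have lhs_eq : ∫ u : ℝ in univ, Real.exp (-u^2) = Real.sqrt Real.pi := by
      rw [setIntegral_univ]
      have : ∀ u : ℝ, Real.exp (-u^2) = Real.exp (-1*u^2) := fun u => by norm_num
      simp_rw [this]
      rw [integral_gaussian]
      norm_num
    rw [lhs_eq] at key
    have rhs_eq : ∫ x in Ioi (0:ℝ), |1 + Real.sqrt b / x^2| • Real.exp (-(f x)^2)
        = Real.exp (2*Real.sqrt b) * (2 * ∫ x in Ioi (0:ℝ), Real.exp (-x^2 - b/x^2)) := by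
      have step1 : ∀ x ∈ Ioi (0:ℝ), |1 + Real.sqrt b / x^2| • Real.exp (-(f x)^2)
          = Real.exp (2*Real.sqrt b) * (Real.exp (-x^2 - b/x^2)
              + Real.sqrt b / x^2 * Real.exp (-x^2 - b/x^2)) := by
        intro x hx
        have hx0 : (0:ℝ) < x := hx
        have habs : |1 + Real.sqrt b / x^2| = 1 + Real.sqrt b / x^2 :=
          _root_.abs_of_nonneg (by positivity)
        have hfx : (f x)^2 = x^2 + b/x^2 - 2*Real.sqrt b := by
          have hxx : x * (Real.sqrt b / x) = Real.sqrt b := by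
            field_simp
          have hsq : (Real.sqrt b / x)^2 = b / x^2 := by
            rw [div_pow, Real.sq_sqrt hb.le]
          simp only [hf]
          rw [sub_sq, hsq, mul_assoc, hxx]; ring
        rw [smul_eq_mul, habs, hfx]
        rw [show -(x^2 + b/x^2 - 2*Real.sqrt b) = (-x^2 - b/x^2) + 2*Real.sqrt b by ring,
          Real.exp_add]
        ring
      rw [setIntegral_congr_fun measurableSet_Ioi step1]
      rw [integral_const_mul, integral_add (levyAux_integrableOn_rexp hb.le)
        (levyAux_integrableOn_rexp' hb), ← levyAux_sub_a hb]
      ring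
    rw [rhs_eq] at key
    have h2s := Real.exp_pos (2*Real.sqrt b)
    have : ∫ x in Ioi (0:ℝ), Real.exp (-x^2 - b/x^2)
        = Real.sqrt Real.pi / (2 * Real.exp (2*Real.sqrt b)) := by
      field_simp at key ⊢
      linarith
    rw [this, show -2*Real.sqrt b = -(2*Real.sqrt b) by ring, Real.exp_neg]
    field_simp

noncomputable def levyG (β : ℂ) : ℂ :=
    ∫ x in Set.Ioi (0:ℝ), Complex.exp (-(x:ℂ)^2 - β/(x:ℂ)^2)

lemma levyAux_meas (β : ℂ) : AEStronglyMeasurable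
    (fun x : ℝ => Complex.exp (-(x:ℂ)^2 - β/(x:ℂ)^2)) (volume.restrict (Ioi 0)) := by
  apply ContinuousOn.aestronglyMeasurable ?_ measurableSet_Ioi
  apply Complex.continuous_exp.comp_continuousOn
  apply ContinuousOn.sub (by fun_prop)
  exact continuousOn_const.div (by fun_prop) (fun x hx =>
    pow_ne_zero 2 (by exact_mod_cast ne_of_gt (mem_Ioi.mp hx)))

lemma levyAux_norm_cexp (β : ℂ) (x : ℝ) :
    ‖Complex.exp (-(x:ℂ)^2 - β/(x:ℂ)^2)‖ = Real.exp (-x^2 - β.re/x^2) := by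
  rw [Complex.norm_exp]
  congr 1
  have : ((x:ℂ))^2 = ((x^2 : ℝ) : ℂ) := by push_cast; ring
  rw [this, Complex.sub_re, Complex.div_ofReal_re]
  simp [← Complex.ofReal_pow]

lemma levyG_hasDerivAt {β : ℂ} (hβ : 0 < β.re) :
    HasDerivAt levyG
      (∫ x in Set.Ioi (0:ℝ), -(1/(x:ℂ)^2) * Complex.exp (-(x:ℂ)^2 - β/(x:ℂ)^2)) β := by
  set δ := β.re / 2 with hδ
  have hδ0 : 0 < δ := by positivity
  have key := hasDerivAt_integral_of_dominated_loc_of_deriv_le (μ := volume.restrict (Ioi 0))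
    (F := fun β (x : ℝ) => Complex.exp (-(x:ℂ)^2 - β/(x:ℂ)^2))
    (F' := fun β (x : ℝ) => -(1/(x:ℂ)^2) * Complex.exp (-(x:ℂ)^2 - β/(x:ℂ)^2))
    (x₀ := β) (s := Metric.ball β δ)
    (bound := fun x => (1/δ) * Real.exp (-1*x^2)) (Metric.ball_mem_nhds β hδ0)
    (Filter.Eventually.of_forall (fun β' => levyAux_meas β'))
    (levyAux_integrableOn_cexp (le_of_lt hβ))
    ?F'meas ?bound ?boundint ?diff
  · exact key.2
  · apply AEStronglyMeasurable.mul ?_ (levyAux_meas β)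
    apply ContinuousOn.aestronglyMeasurable ?_ measurableSet_Ioi
    apply ContinuousOn.neg
    exact continuousOn_const.div (by fun_prop) (fun x hx => by
      have : (x:ℂ) ≠ 0 := by exact_mod_cast ne_of_gt (mem_Ioi.mp hx)
      exact pow_ne_zero 2 this)
  · filter_upwards [ae_restrict_mem measurableSet_Ioi] with x hx
    intro β' hβ'
    have hx0 : (0:ℝ) < x := hx
    have hre : δ ≤ β'.re := by
      have h1 : |β'.re - β.re| ≤ ‖β' - β‖ := by
        simpa using Complex.abs_re_le_norm (β' - β)
      have h2 : ‖β' - β‖ < δ := by simpa [dist_eq_norm] using hβ'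
      have := abs_lt.mp (lt_of_le_of_lt h1 h2)
      simp only [hδ] at *
      linarith
    rw [norm_mul, levyAux_norm_cexp]
    have hn1 : ‖-(1/(x:ℂ)^2)‖ = 1/x^2 := by
      rw [norm_neg, norm_div, norm_one, norm_pow, Complex.norm_real, Real.norm_eq_abs,
        _root_.abs_of_nonneg hx0.le]
    rw [hn1]
    have hmono : Real.exp (-x^2 - β'.re/x^2) ≤ Real.exp (-x^2 - δ/x^2) := by
      apply Real.exp_le_exp.mpr
      have : δ / x^2 ≤ β'.re / x^2 := by gcongr
      linarith
    calc 1/x^2 * Real.exp (-x^2 - β'.re/x^2)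
        ≤ 1/x^2 * Real.exp (-x^2 - δ/x^2) :=
          mul_le_mul_of_nonneg_left hmono (by positivity)
      _ = (1/δ) * ((δ/x^2) * Real.exp (-(δ/x^2))) * Real.exp (-x^2) := by
          rw [show -x^2 - δ/x^2 = -(δ/x^2) + -x^2 by ring, Real.exp_add]
          field_simp
      _ ≤ (1/δ) * 1 * Real.exp (-x^2) := by
          apply mul_le_mul_of_nonneg_right ?_ (Real.exp_pos _).le
          exact mul_le_mul_of_nonneg_left (levyAux_t_exp_le (by positivity)) (by positivity)
      _ = (1/δ) * Real.exp (-1*x^2) := by ring_nf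
  · exact ((integrable_exp_neg_mul_sq one_pos).const_mul (1/δ)).integrableOn
  · filter_upwards [ae_restrict_mem measurableSet_Ioi] with x hx
    intro β' hβ'
    have hx0 : (0:ℝ) < x := hx
    have hxne : ((x:ℂ))^2 ≠ 0 := pow_ne_zero 2 (by exact_mod_cast ne_of_gt hx0)
    have h1 : HasDerivAt (fun b : ℂ => -(x:ℂ)^2 - b/(x:ℂ)^2) (-(1/(x:ℂ)^2)) β' := by
      have := ((hasDerivAt_id β').div_const ((x:ℂ)^2)).const_sub (-(x:ℂ)^2)
      simpa [one_div] using this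
    simpa [mul_comm] using h1.cexp

noncomputable def levyR (β : ℂ) : ℂ :=
    ((Real.sqrt Real.pi / 2 : ℝ) : ℂ) * Complex.exp (-2 * β ^ (1/2 : ℂ))

lemma levyAux_cpow_half_real {b : ℝ} (hb : 0 ≤ b) :
    (b : ℂ) ^ (1/2 : ℂ) = ((Real.sqrt b : ℝ) : ℂ) := by
  rw [Real.sqrt_eq_rpow, Complex.ofReal_cpow hb]
  norm_num

lemma levyAux_GR_real {b : ℝ} (hb : 0 < b) : levyG (b : ℂ) = levyR (b : ℂ) := by
  unfold levyG levyR
  have h1 : ∀ x : ℝ, Complex.exp (-(x:ℂ)^2 - (b:ℂ)/(x:ℂ)^2)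
      = ((Real.exp (-x^2 - b/x^2) : ℝ) : ℂ) := levyAux_rexp_eq b
  simp_rw [h1]
  have h2 : ∫ x in Ioi (0:ℝ), ((Real.exp (-x^2 - b/x^2) : ℝ) : ℂ)
      = (((∫ x in Ioi (0:ℝ), Real.exp (-x^2 - b/x^2)) : ℝ) : ℂ) := integral_ofReal
  rw [h2, levyAux_real_formula hb.le, levyAux_cpow_half_real hb.le]
  push_cast [← Complex.ofReal_exp]
  ring_nf
  rw [show (-((Real.sqrt b : ℂ) * 2) : ℂ) = ((-(Real.sqrt b * 2) : ℝ) : ℂ) by push_cast; ring,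
    ← Complex.ofReal_exp]

lemma levyAux_U_analytic_G :
    AnalyticOnNhd ℂ levyG {z : ℂ | 0 < z.re} := by
  apply DifferentiableOn.analyticOnNhd ?_ (isOpen_lt continuous_const Complex.continuous_re)
  exact fun z hz => (levyG_hasDerivAt hz).differentiableAt.differentiableWithinAt

lemma levyAux_U_analytic_R :
    AnalyticOnNhd ℂ levyR {z : ℂ | 0 < z.re} := by
  apply DifferentiableOn.analyticOnNhd ?_ (isOpen_lt continuous_const Complex.continuous_re)
  intro z hz
  have h0 : z ∈ Complex.slitPlane := Complex.mem_slitPlane_iff.mpr (Or.inl hz)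
  have h1 : DifferentiableAt ℂ (fun z : ℂ => z ^ (1/2:ℂ)) z :=
    ((hasDerivAt_id z).cpow_const h0).differentiableAt
  exact (((h1.const_mul (-2)).cexp).const_mul _).differentiableWithinAt

lemma levyAux_GR_halfplane {β : ℂ} (hβ : 0 < β.re) : levyG β = levyR β := by
  have hU : IsPreconnected {z : ℂ | 0 < z.re} := (convex_halfSpace_re_gt 0).isPreconnected
  have h1 : (1:ℂ) ∈ {z : ℂ | 0 < z.re} := by norm_num
  have hfreq : ∃ᶠ z in nhdsWithin (1:ℂ) {(1:ℂ)}ᶜ, levyG z = levyR z := by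
    have htend : Tendsto (fun n : ℕ => (((1 + ((n:ℝ)+1)⁻¹ : ℝ)) : ℂ)) atTop
        (nhdsWithin (1:ℂ) {(1:ℂ)}ᶜ) := by
      apply tendsto_nhdsWithin_of_tendsto_nhds_of_eventually_within
      · have : Tendsto (fun n : ℕ => (1 + ((n:ℝ)+1)⁻¹ : ℝ)) atTop (nhds 1) := by
          have := tendsto_one_div_add_atTop_nhds_zero_nat (𝕜 := ℝ)
          have h3 := (tendsto_const_nhds (x := (1:ℝ))).add
            (by simpa [one_div] using this : Tendsto (fun n : ℕ => ((n:ℝ)+1)⁻¹) atTop (nhds 0))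
          simpa using h3
        have h2 : Tendsto (fun x : ℝ => (x : ℂ)) (nhds 1) (nhds (1:ℂ)) := by
          exact_mod_cast Complex.continuous_ofReal.tendsto 1
        exact h2.comp this
      · apply Eventually.of_forall
        intro n
        simp only [mem_compl_iff, mem_singleton_iff]
        intro h
        have : (1 + ((n:ℝ)+1)⁻¹ : ℝ) = 1 := by exact_mod_cast h
        have hn : (0:ℝ) < ((n:ℝ)+1)⁻¹ := by positivity
        linarith [this]
    apply htend.frequently
    apply Frequently.of_forall
    intro n
    exact levyAux_GR_real (by positivity)
  exact levyAux_U_analytic_G.eqOn_of_preconnected_of_frequently_eq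
    levyAux_U_analytic_R hU h1 hfreq hβ

lemma levyAux_GR_boundary {β : ℂ} (hre : β.re = 0) (him : β.im ≠ 0) :
    levyG β = levyR β := by
  set u : ℕ → ℂ := fun n => β + (((n:ℝ)+1)⁻¹ : ℝ) with hu
  have hupos : ∀ n, 0 < (u n).re := by
    intro n
    have : (u n).re = ((n:ℝ)+1)⁻¹ := by
      simp only [hu, Complex.add_re, Complex.ofReal_re, hre, zero_add]
    rw [this]
    positivity
  have hutend : Tendsto u atTop (nhds β) := by
    have h0 : Tendsto (fun n : ℕ => ((((n:ℝ)+1)⁻¹ : ℝ) : ℂ)) atTop (nhds 0) := by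
      have : Tendsto (fun n : ℕ => (((n:ℝ)+1)⁻¹ : ℝ)) atTop (nhds 0) := by
        simpa [one_div] using tendsto_one_div_add_atTop_nhds_zero_nat (𝕜 := ℝ)
      have := (Complex.continuous_ofReal.tendsto 0).comp this
      simpa [Function.comp_def, Complex.ofReal_zero] using this
    have := (tendsto_const_nhds (x := β)).add h0
    rw [hu]
    simpa using this
  -- G tendsto
  have hG : Tendsto (fun n => levyG (u n)) atTop (nhds (levyG β)) := by
    unfold levyG
    apply tendsto_integral_of_dominated_convergence (fun x => Real.exp (-1*x^2))
      (fun n => levyAux_meas (u n))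
      ((integrable_exp_neg_mul_sq one_pos).integrableOn)
    · intro n
      filter_upwards [ae_restrict_mem measurableSet_Ioi] with x hx
      have hx0 : (0:ℝ) < x := hx
      rw [levyAux_norm_cexp]
      apply Real.exp_le_exp.mpr
      have : 0 ≤ (u n).re / x^2 := div_nonneg (hupos n).le (by positivity)
      nlinarith
    · filter_upwards [ae_restrict_mem measurableSet_Ioi] with x hx
      have hx0 : (0:ℝ) < x := hx
      have hcont : ContinuousAt (fun β' : ℂ => Complex.exp (-(x:ℂ)^2 - β'/(x:ℂ)^2)) β := by
        apply Complex.continuous_exp.continuousAt.comp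
        exact (continuousAt_const.sub (continuousAt_id.div_const _))
      exact hcont.tendsto.comp hutend
  -- R tendsto
  have hR : Tendsto (fun n => levyR (u n)) atTop (nhds (levyR β)) := by
    have h0 : β ∈ Complex.slitPlane := Complex.mem_slitPlane_iff.mpr (Or.inr him)
    have hcont : ContinuousAt levyR β := by
      unfold levyR
      exact continuousAt_const.mul
        (Complex.continuous_exp.continuousAt.comp
          ((continuousAt_cpow_const h0).const_mul (-2)))
    exact hcont.tendsto.comp hutend
  have heq : (fun n => levyG (u n)) = fun n => levyR (u n) := by
    funext n; exact levyAux_GR_halfplane (hupos n)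
  rw [heq] at hG
  exact tendsto_nhds_unique hG hR

lemma levyAux_exp_half_log {r : ℝ} (hr : 0 < r) :
    Complex.exp (((Real.log r : ℝ) : ℂ) * (1/2 : ℂ)) = ((Real.sqrt r : ℝ) : ℂ) := by
  have : ((Real.log r : ℝ) : ℂ) * (1/2 : ℂ) = ((Real.log r * (1/2) : ℝ) : ℂ) := by push_cast; ring
  rw [this, ← Complex.ofReal_exp]
  congr 1
  rw [Real.sqrt_eq_rpow, Real.rpow_def_of_pos hr]

lemma levyAux_cpow_mul_I (r : ℝ) (hr : 0 < r) (s : ℝ) (hs : s = 1 ∨ s = -1) :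
    ((r:ℂ) * (s * Complex.I)) ^ (1/2:ℂ)
      = ((Real.sqrt (2*r)/2 : ℝ):ℂ) * (1 + s * Complex.I) := by
  have hsI : ((s:ℝ):ℂ) * Complex.I ≠ 0 := by
    rcases hs with rfl | rfl <;> simp [Complex.I_ne_zero]
  have hz : ((r:ℂ) * (s * Complex.I)) ≠ 0 := by
    apply mul_ne_zero _ hsI
    exact_mod_cast ne_of_gt hr
  rw [Complex.cpow_def_of_ne_zero hz, Complex.log_ofReal_mul hr hsI]
  have hlog : Complex.log ((s:ℝ) * Complex.I) = (s * (π/2) : ℝ) * Complex.I := by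
    rcases hs with rfl | rfl
    · simpa using Complex.log_I
    · rw [show ((((-1:ℝ)):ℂ) * Complex.I) = -Complex.I by push_cast; ring,
        Complex.log_neg_I]
      push_cast; ring
  rw [hlog, add_mul, Complex.exp_add, levyAux_exp_half_log hr]
  have h2 : ((s * (π/2) : ℝ) : ℂ) * Complex.I * (1/2 : ℂ)
      = ((s * (π/4) : ℝ) : ℂ) * Complex.I := by push_cast; ring
  rw [h2, Complex.exp_mul_I, ← Complex.ofReal_cos, ← Complex.ofReal_sin]
  have hcos : Real.cos (s * (π/4)) = Real.sqrt 2 / 2 := by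
    rcases hs with rfl | rfl
    · simpa using Real.cos_pi_div_four
    · rw [show (-1 : ℝ) * (π/4) = -(π/4) by ring, Real.cos_neg]
      exact Real.cos_pi_div_four
  have hsin : Real.sin (s * (π/4)) = s * (Real.sqrt 2 / 2) := by
    rcases hs with rfl | rfl
    · simpa using Real.sin_pi_div_four
    · rw [show (-1 : ℝ) * (π/4) = -(π/4) by ring, Real.sin_neg, Real.sin_pi_div_four]
      ring
  rw [hcos, hsin]
  have hsq : Real.sqrt (2*r) = Real.sqrt 2 * Real.sqrt r := Real.sqrt_mul (by norm_num) r
  rw [hsq]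
  push_cast
  ring

-- substitution t = c/(2 x^2)
lemma levyAux_sub_E (c ω : ℝ) (hc : 0 < c) :
    (∫ t in Set.Ioi (0:ℝ),
        Complex.exp (Complex.I * ω * t) *
          ((Real.sqrt (c / (2 * Real.pi * t ^ 3)) * Real.exp (-c / (2 * t)) : ℝ) : ℂ))
      = ((2 / Real.sqrt Real.pi : ℝ)) •
          levyG (((c * ω / 2 : ℝ) : ℂ) * (-Complex.I)) := by
  set g : ℝ → ℂ := fun t => Complex.exp (Complex.I * ω * t) *
      ((Real.sqrt (c / (2 * Real.pi * t ^ 3)) * Real.exp (-c / (2 * t)) : ℝ) : ℂ) with hg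
  have himg : (fun x : ℝ => c / (2 * x^2)) '' (Ioi 0) = Ioi 0 := by
    ext t; constructor
    · rintro ⟨x, hx, rfl⟩
      have hx0 : (0:ℝ) < x := hx
      exact div_pos hc (by positivity)
    · intro ht
      have ht0 : (0:ℝ) < t := ht
      refine ⟨Real.sqrt (c/(2*t)), Real.sqrt_pos.mpr (div_pos hc (by positivity)), ?_⟩
      have h1 : (Real.sqrt (c/(2*t)))^2 = c/(2*t) := Real.sq_sqrt (div_pos hc (by positivity)).le
      simp only
      rw [h1]
      field_simp
  have hderiv : ∀ x ∈ Ioi (0:ℝ), HasDerivWithinAt (fun x : ℝ => c / (2 * x^2))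
      (-c / x^3) (Ioi 0) x := by
    intro x hx
    have hx0 : (0:ℝ) < x := hx
    have h1 : HasDerivAt (fun x : ℝ => (x^2)⁻¹) (-(2*x^(2-1))/(x^2)^2) x :=
      (hasDerivAt_pow 2 x).inv (by positivity)
    have h2 := h1.const_mul (c/2)
    have h3 : (c/2) * (-(2*x^(2-1))/(x^2)^2) = -c / x^3 := by
      field_simp
      ring
    rw [h3] at h2
    exact (h2.congr_deriv rfl).hasDerivWithinAt.congr
      (fun y hy => by field_simp) (by field_simp)
  have hinj : InjOn (fun x : ℝ => c / (2 * x^2)) (Ioi 0) := by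
    have : StrictAntiOn (fun x : ℝ => c / (2 * x^2)) (Ioi 0) := by
      intro x hx y hy hxy
      have hx0 : (0:ℝ) < x := hx
      have hy0 : (0:ℝ) < y := hy
      simp only
      apply div_lt_div_of_pos_left hc (by positivity)
      nlinarith
    exact this.injOn
  have key := integral_image_eq_integral_abs_deriv_smul measurableSet_Ioi hderiv hinj g
  rw [himg] at key
  rw [key]
  unfold levyG
  rw [← integral_smul]
  apply setIntegral_congr_fun measurableSet_Ioi
  intro x hx
  have hx0 : (0:ℝ) < x := hx
  have habs : |(-c / x^3 : ℝ)| = c / x^3 := by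
    rw [abs_div, abs_neg, _root_.abs_of_nonneg hc.le, _root_.abs_of_nonneg (by positivity)]
  have hπ0 : (0:ℝ) < Real.sqrt Real.pi := Real.sqrt_pos.mpr Real.pi_pos
  have hsqrt : Real.sqrt (c / (2 * Real.pi * (c/(2*x^2)) ^ 3))
      = 2 * x^3 / (Real.sqrt Real.pi * c) := by
    have hπ : Real.sqrt Real.pi ^ 2 = Real.pi := Real.sq_sqrt Real.pi_pos.le
    have h1 : c / (2 * Real.pi * (c/(2*x^2)) ^ 3) = (2 * x^3 / (Real.sqrt Real.pi * c))^2 := by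
      conv_rhs => rw [div_pow, mul_pow (Real.sqrt Real.pi) c, hπ]
      field_simp
    rw [h1, Real.sqrt_sq (by positivity)]
  have h2 : -c / (2 * (c/(2*x^2))) = -x^2 := by
    field_simp
  have harg : -(x:ℂ)^2 - (((c*ω/2:ℝ):ℂ)*(-Complex.I))/(x:ℂ)^2
      = Complex.I * (ω:ℂ) * ((c/(2*x^2) : ℝ):ℂ) + ((-x^2 : ℝ) : ℂ) := by
    have hxc : ((x:ℂ))^2 ≠ 0 := pow_ne_zero 2 (by exact_mod_cast ne_of_gt hx0)
    push_cast
    field_simp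
    ring
  simp only [hg]
  rw [habs, h2, hsqrt, harg, Complex.exp_add]
  rw [Complex.real_smul, Complex.real_smul]
  rw [← Complex.ofReal_exp]
  push_cast
  have hπc : ((Real.sqrt Real.pi : ℝ):ℂ) ≠ 0 := by exact_mod_cast ne_of_gt hπ0
  have hxc : ((x:ℝ):ℂ) ≠ 0 := by exact_mod_cast ne_of_gt hx0
  have hcc : ((c:ℝ):ℂ) ≠ 0 := by exact_mod_cast ne_of_gt hc
  field_simp

/-- The characteristic function of the Lévy distribution with location 0 and scale `c`. -/
theorem levy_charFun (c ω : ℝ) (hc : 0 < c) :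
    (∫ t in Set.Ioi (0:ℝ),
        Complex.exp (Complex.I * ω * t) *
          ((Real.sqrt (c / (2 * Real.pi * t ^ 3)) * Real.exp (-c / (2 * t)) : ℝ) : ℂ))
      = Complex.exp (-(Real.sqrt (c * |ω|) : ℝ)
          + Complex.I * (Real.sign ω : ℝ) * (Real.sqrt (c * |ω|) : ℝ)) := by
  rw [levyAux_sub_E c ω hc]
  have hπ0 : (0:ℝ) < Real.sqrt Real.pi := Real.sqrt_pos.mpr Real.pi_pos
  rcases eq_or_ne ω 0 with rfl | hω
  · have hβ : (((c * (0:ℝ) / 2 : ℝ) : ℂ) * (-Complex.I)) = 0 := by norm_num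
    rw [hβ]
    have hG0 : levyG 0 = ((Real.sqrt Real.pi / 2 : ℝ) : ℂ) := by
      unfold levyG
      have h1 : ∀ x : ℝ, Complex.exp (-(x:ℂ)^2 - 0/(x:ℂ)^2)
          = ((Real.exp (-x^2 - (0:ℝ)/x^2) : ℝ) : ℂ) := by
        intro x
        rw [← levyAux_rexp_eq 0 x]
        norm_num
      simp_rw [h1]
      have h2 : ∫ x in Ioi (0:ℝ), ((Real.exp (-x^2 - (0:ℝ)/x^2) : ℝ) : ℂ)
          = (((∫ x in Ioi (0:ℝ), Real.exp (-x^2 - (0:ℝ)/x^2)) : ℝ) : ℂ) := integral_ofReal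
      rw [h2, levyAux_real_formula le_rfl]
      norm_num
    rw [hG0, Complex.real_smul]
    have h0 : Real.sqrt (c*|(0:ℝ)|) = 0 := by simp
    rw [Real.sign_zero, h0]
    push_cast
    rw [show (-(0:ℂ) + Complex.I * 0 * 0) = 0 by ring, Complex.exp_zero]
    have hππ : ((Real.sqrt Real.pi : ℝ):ℂ) ≠ 0 := by exact_mod_cast ne_of_gt hπ0
    field_simp
  · set r : ℝ := c * |ω| / 2 with hr
    have hr0 : 0 < r := div_pos (mul_pos hc (abs_pos.mpr hω)) two_pos
    set s : ℝ := -Real.sign ω with hs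
    have hs1 : s = 1 ∨ s = -1 := by
      rcases lt_or_gt_of_ne hω with h | h
      · left; rw [hs, Real.sign_of_neg h]; norm_num
      · right; rw [hs, Real.sign_of_pos h]
    have hβ : (((c * ω / 2 : ℝ) : ℂ) * (-Complex.I))
        = ((r:ℝ):ℂ) * (((s:ℝ):ℂ) * Complex.I) := by
      rcases lt_or_gt_of_ne hω with h | h
      · rw [hr, hs, Real.sign_of_neg h, abs_of_neg h]; push_cast; ring
      · rw [hr, hs, Real.sign_of_pos h, abs_of_pos h]; push_cast; ring
    rw [hβ]
    have hre : (((r:ℝ):ℂ) * (((s:ℝ):ℂ) * Complex.I)).re = 0 := by simp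
    have him : (((r:ℝ):ℂ) * (((s:ℝ):ℂ) * Complex.I)).im ≠ 0 := by
      have : (((r:ℝ):ℂ) * (((s:ℝ):ℂ) * Complex.I)).im = r * s := by simp
      rw [this]
      rcases hs1 with h | h <;> rw [h] <;> simp [ne_of_gt hr0]
    rw [levyAux_GR_boundary hre him]
    unfold levyR
    rw [levyAux_cpow_mul_I r hr0 s hs1]
    have h2r : Real.sqrt (2*r) = Real.sqrt (c*|ω|) := by rw [hr]; congr 1; ring
    rw [h2r, Complex.real_smul]
    have hsign : (Real.sign ω : ℝ) = -s := by rw [hs]; ring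
    have hexp : (-2 : ℂ) * (((Real.sqrt (c*|ω|)/2 : ℝ):ℂ) * (1 + ((s:ℝ):ℂ) * Complex.I))
        = -((Real.sqrt (c*|ω|) : ℝ):ℂ)
            + Complex.I * ((Real.sign ω : ℝ):ℂ) * ((Real.sqrt (c*|ω|):ℝ):ℂ) := by
      rw [hsign]; push_cast; ring
    rw [hexp]
    rw [← mul_assoc]
    have hk : ((2/Real.sqrt Real.pi : ℝ):ℂ) * ((Real.sqrt Real.pi/2 : ℝ):ℂ) = 1 := by
      push_cast
      have : ((Real.sqrt Real.pi : ℝ):ℂ) ≠ 0 := by exact_mod_cast ne_of_gt hπ0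
      field_simp
    rw [hk, one_mul]
end

section
/- (Theorem 1) Let c > 0 and let T₁ and T₂ be independent random variables, each with the Lévy density with scale c. Then the characteristic function of the noise L_n = T₂ − T₁ satisfies, for every real ω: ∫₀^∞ ∫₀^∞ exp(i ω (t₂ − t₁)) · f_c(t₂) · f_c(t₁) dt₁ dt₂ = exp(−2√(c·|ω|)) = exp(−√(c_B · |ω|)) with c_B = 4c. In particular the characteristic function is real and symmetric in ω, so L_n is a symmetric stable random variable with stability index 1/2, skewness 0, and scale c_B = 4c. -/
open MeasureTheory Set Filter Topology

lemma glasser (a : ℝ) (ha : 0 ≤ a) :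
    ∫ u in Ioi (0:ℝ), Real.exp (-(u^2 + a^2/u^2)) =
      Real.sqrt Real.pi / 2 * Real.exp (-(2*a)) := by
  rcases eq_or_lt_of_le ha with rfl | ha
  · have h := integral_gaussian_Ioi 1
    simp only [neg_mul, one_mul] at h
    norm_num [h]
  · set g : ℝ → ℝ := fun v => Real.exp (-(v^2 + a^2/v^2)) with hg
    have hgcont : ContinuousOn g (Ioi 0) := by
      apply ContinuousOn.rexp
      apply ContinuousOn.neg
      apply ContinuousOn.add (continuousOn_pow 2)
      exact continuousOn_const.div (continuousOn_pow 2)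
        (fun x hx => pow_ne_zero _ (ne_of_gt hx))
    have hgint : IntegrableOn g (Ioi 0) := by
      apply Integrable.mono ((integrable_exp_neg_mul_sq one_pos).integrableOn (s := Ioi 0))
      · exact hgcont.aestronglyMeasurable measurableSet_Ioi
      · filter_upwards [ae_restrict_mem measurableSet_Ioi] with u hu
        rw [Real.norm_eq_abs, Real.norm_eq_abs, abs_of_pos (Real.exp_pos _),
          abs_of_pos (Real.exp_pos _), Real.exp_le_exp]
        have : 0 ≤ a^2/u^2 := by positivity
        nlinarith
    -- step 1 : u ↦ a/u
    have himg1 : (fun u : ℝ => a/u) '' Ioi 0 = Ioi 0 := by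
      ext v
      constructor
      · rintro ⟨u, hu, rfl⟩; exact div_pos ha hu
      · intro hv; exact ⟨a/v, div_pos ha hv, by field_simp⟩
    have hd1 : ∀ x ∈ Ioi (0:ℝ), HasDerivWithinAt (fun u : ℝ => a/u) (-a/x^2) (Ioi 0) x := by
      intro x hx
      have hx0 : x ≠ 0 := ne_of_gt (show (0:ℝ) < x from hx)
      have := ((hasDerivAt_inv hx0).const_mul a).hasDerivWithinAt (s := Ioi 0)
      simp only [div_eq_mul_inv]
      refine this.congr_deriv ?_
      ring
    have hinj1 : InjOn (fun u : ℝ => a/u) (Ioi 0) := by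
      intro u hu v hv h
      simp only at h
      rw [div_eq_div_iff (ne_of_gt (show (0:ℝ) < u from hu))
        (ne_of_gt (show (0:ℝ) < v from hv))] at h
      have h2 : a * u = a * v := by linarith
      exact mul_left_cancel₀ (ne_of_gt ha) h2
    have step1 : ∫ u in Ioi (0:ℝ), g u = ∫ u in Ioi (0:ℝ), (a/u^2) * g u := by
      conv_lhs => rw [← himg1]
      rw [integral_image_eq_integral_abs_deriv_smul measurableSet_Ioi hd1 hinj1 g]
      apply setIntegral_congr_fun measurableSet_Ioi
      intro u hu
      have hu0 : (0:ℝ) < u := hu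
      simp only [smul_eq_mul]
      have habs : |(-a/u^2)| = a/u^2 := by
        rw [abs_div, abs_neg, abs_of_pos ha, abs_of_pos (by positivity : (0:ℝ) < u^2)]
      rw [habs]
      congr 1
      rw [hg]; simp only
      congr 1
      rw [div_pow]
      have h1 : a^2/(a^2/u^2) = u^2 := by
        rw [div_div_eq_mul_div, div_eq_iff (by positivity : a^2 ≠ 0)]
        ring
      rw [h1]
      ring
    have hgint2 : IntegrableOn (fun u => (a/u^2) * g u) (Ioi 0) := by
      have := (integrableOn_image_iff_integrableOn_abs_deriv_smul
        measurableSet_Ioi hd1 hinj1 g).mp (by rw [himg1]; exact hgint)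
      apply IntegrableOn.congr_fun this _ measurableSet_Ioi
      intro u hu
      have hu0 : (0:ℝ) < u := hu
      simp only [smul_eq_mul]
      have habs : |(-a/u^2)| = a/u^2 := by
        rw [abs_div, abs_neg, abs_of_pos ha, abs_of_pos (by positivity : (0:ℝ) < u^2)]
      rw [habs]
      congr 1
      rw [hg]; simp only
      congr 1
      rw [div_pow]
      have h1 : a^2/(a^2/u^2) = u^2 := by
        rw [div_div_eq_mul_div, div_eq_iff (by positivity : a^2 ≠ 0)]
        ring
      rw [h1]
      ring
    -- step 2 : u ↦ u - a/u
    have himg2 : (fun u : ℝ => u - a/u) '' Ioi 0 = univ := by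
      ext w
      simp only [mem_univ, iff_true]
      refine ⟨(w + Real.sqrt (w^2 + 4*a))/2, ?_, ?_⟩
      · have hs : |w| < Real.sqrt (w^2 + 4*a) := by
          rw [← Real.sqrt_sq_eq_abs]
          exact Real.sqrt_lt_sqrt (sq_nonneg w) (by linarith)
        have := neg_abs_le w
        simp only [mem_Ioi]
        nlinarith [abs_nonneg w]
      · set sq := Real.sqrt (w^2 + 4*a) with hsq
        have hs2 : sq ^ 2 = w^2 + 4*a := Real.sq_sqrt (by positivity)
        have hs : |w| < sq := by
          rw [hsq, ← Real.sqrt_sq_eq_abs]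
          exact Real.sqrt_lt_sqrt (sq_nonneg w) (by linarith)
        have hu0 : (0:ℝ) < (w + sq)/2 := by
          have := neg_abs_le w
          nlinarith [abs_nonneg w]
        have ha2 : a = ((w + sq)/2 - w) * ((w + sq)/2) := by
          linear_combination -hs2/4
        simp only
        rw [ha2, mul_div_cancel_right₀ _ (ne_of_gt hu0)]
        ring
    have hd2 : ∀ x ∈ Ioi (0:ℝ), HasDerivWithinAt (fun u : ℝ => u - a/u) (1 + a/x^2) (Ioi 0) x := by
      intro x hx
      have hx0 : x ≠ 0 := ne_of_gt (show (0:ℝ) < x from hx)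
      have h2 := ((hasDerivAt_inv hx0).const_mul a)
      have := ((hasDerivAt_id x).sub h2).hasDerivWithinAt (s := Ioi 0)
      simp only [div_eq_mul_inv]
      refine this.congr_deriv ?_
      ring
    have hinj2 : InjOn (fun u : ℝ => u - a/u) (Ioi 0) := by
      intro u hu v hv h
      have hu0 : (0:ℝ) < u := hu
      have hv0 : (0:ℝ) < v := hv
      simp only at h
      have hmul : (u - a/u)*(u*v) = (v - a/v)*(u*v) := by rw [h]
      have e1 : (u - a/u)*(u*v) = u^2*v - a*v := by field_simp
      have e2 : (v - a/v)*(u*v) = u*v^2 - a*u := by field_simp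
      have key : (u - v) * (u*v + a) = 0 := by linear_combination hmul - e1 + e2
      rcases mul_eq_zero.mp key with h1 | h1
      · linarith [sub_eq_zero.mp h1]
      · nlinarith
    have step2 : ∫ w : ℝ, Real.exp (-(w^2 + 2*a)) =
        ∫ u in Ioi (0:ℝ), (1 + a/u^2) * g u := by
      rw [← setIntegral_univ, ← himg2,
        integral_image_eq_integral_abs_deriv_smul measurableSet_Ioi hd2 hinj2]
      apply setIntegral_congr_fun measurableSet_Ioi
      intro u hu
      have hu0 : (0:ℝ) < u := hu
      simp only [smul_eq_mul]
      have habs : |1 + a/u^2| = 1 + a/u^2 := abs_of_pos (by positivity)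
      rw [habs]
      congr 1
      rw [hg]; simp only
      congr 1
      have : (u - a/u)^2 = u^2 - 2*a + a^2/u^2 := by
        field_simp; ring
      rw [this]; ring
    have lhs2 : ∫ w : ℝ, Real.exp (-(w^2 + 2*a)) = Real.sqrt Real.pi * Real.exp (-(2*a)) := by
      have : ∀ w : ℝ, Real.exp (-(w^2 + 2*a)) = Real.exp (-1*w^2) * Real.exp (-(2*a)) := by
        intro w; rw [← Real.exp_add]; ring_nf
      simp_rw [this]
      rw [integral_mul_const, integral_gaussian]
      norm_num
    have rhs2 : ∫ u in Ioi (0:ℝ), (1 + a/u^2) * g u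
        = 2 * ∫ u in Ioi (0:ℝ), g u := by
      have : ∀ u : ℝ, (1 + a/u^2) * g u = g u + (a/u^2) * g u := fun u => by ring
      simp_rw [this]
      rw [integral_add hgint hgint2, ← step1]
      ring
    rw [step2, rhs2] at lhs2
    linarith



lemma levy_subst (c : ℝ) (hc : 0 < c) (G : ℝ → ℝ) :
    ∫ t in Ioi (0:ℝ), G t =
      ∫ u in Ioi (0:ℝ), |(-c/u^3)| • G (c/2 * (u^2)⁻¹) := by
  have himg : (fun u : ℝ => c/2 * (u^2)⁻¹) '' Ioi 0 = Ioi 0 := by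
    ext t
    constructor
    · rintro ⟨u, hu, rfl⟩
      have hu0 : (0:ℝ) < u := hu
      have : (0:ℝ) < c/2 * (u^2)⁻¹ := by positivity
      exact this
    · intro ht
      have ht0 : (0:ℝ) < t := ht
      refine ⟨Real.sqrt (c/(2*t)), Real.sqrt_pos.mpr (by positivity), ?_⟩
      have h2 : Real.sqrt (c/(2*t)) ^ 2 = c/(2*t) := Real.sq_sqrt (by positivity)
      simp only [h2]
      field_simp
  have hd : ∀ x ∈ Ioi (0:ℝ),
      HasDerivWithinAt (fun u : ℝ => c/2 * (u^2)⁻¹) (-c/x^3) (Ioi 0) x := by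
    intro x hx
    have hx0 : x ≠ 0 := ne_of_gt (show (0:ℝ) < x from hx)
    have h1 := ((hasDerivAt_pow 2 x).inv (pow_ne_zero 2 hx0)).const_mul (c/2)
    have := h1.hasDerivWithinAt (s := Ioi 0)
    refine this.congr_deriv ?_
    field_simp
    ring
  have hinj : InjOn (fun u : ℝ => c/2 * (u^2)⁻¹) (Ioi 0) := by
    intro u hu v hv h
    have hu0 : (0:ℝ) < u := hu
    have hv0 : (0:ℝ) < v := hv
    simp only at h
    have h2 : u^2 = v^2 := by
      have hc2 : c/2 ≠ 0 := by positivity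
      have := mul_left_cancel₀ hc2 h
      exact inv_injective this
    have : (u - v) * (u + v) = 0 := by linear_combination h2
    rcases mul_eq_zero.mp this with h3 | h3
    · linarith [sub_eq_zero.mp h3]
    · linarith
  conv_lhs => rw [← himg]
  exact integral_image_eq_integral_abs_deriv_smul measurableSet_Ioi hd hinj G

lemma levy_laplace (c : ℝ) (hc : 0 < c) (s : ℝ) (hs : 0 ≤ s) :
    ∫ t in Ioi (0:ℝ), levyPDF c t * Real.exp (-(s*t)) =
      Real.exp (-Real.sqrt (2*c*s)) := by
  set a := Real.sqrt (s*c/2) with ha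
  have ha0 : 0 ≤ a := Real.sqrt_nonneg _
  have ha2 : a^2 = s*c/2 := Real.sq_sqrt (by positivity)
  have key : ∀ u : ℝ, u ∈ Ioi (0:ℝ) →
      |(-c/u^3)| • (levyPDF c (c/2 * (u^2)⁻¹) * Real.exp (-(s*(c/2 * (u^2)⁻¹))))
        = (2/Real.sqrt Real.pi) * Real.exp (-(u^2 + a^2/u^2)) := by
    intro u hu
    have hu0 : (0:ℝ) < u := hu
    have ht0 : (0:ℝ) < c/2 * (u^2)⁻¹ := by positivity
    have habs : |(-c/u^3)| = c/u^3 := by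
      rw [abs_div, abs_neg, abs_of_pos hc, abs_of_pos (by positivity : (0:ℝ) < u^3)]
    rw [smul_eq_mul, habs, levyPDF, if_pos ht0]
    have e1 : -c / (2 * (c/2 * (u^2)⁻¹)) = -(u^2) := by field_simp
    have e2 : c / (2 * Real.pi * (c/2 * (u^2)⁻¹)^3) = (2*u^3/c)^2 / Real.pi := by
      rw [div_eq_div_iff (by positivity) (ne_of_gt Real.pi_pos)]
      field_simp
    have e3 : -(s*(c/2 * (u^2)⁻¹)) = -(a^2/u^2) := by
      rw [ha2]; field_simp
    have e4 : Real.sqrt ((2*u^3/c)^2/Real.pi) = (2*u^3/c)/Real.sqrt Real.pi := by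
      rw [Real.sqrt_div (sq_nonneg _), Real.sqrt_sq (by positivity : (0:ℝ) ≤ 2*u^3/c)]
    have e5 : Real.exp (-u^2) * Real.exp (-(a^2/u^2)) = Real.exp (-(u^2 + a^2/u^2)) := by
      rw [← Real.exp_add]; ring_nf
    rw [e1, e2, e3, e4, mul_assoc ((2*u^3/c)/Real.sqrt Real.pi), e5]
    have hpi : Real.sqrt Real.pi ≠ 0 := by positivity
    field_simp
  rw [levy_subst c hc (fun t => levyPDF c t * Real.exp (-(s*t)))]
  rw [setIntegral_congr_fun measurableSet_Ioi key, MeasureTheory.integral_const_mul, glasser a ha0]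
  have hpi : Real.sqrt Real.pi ≠ 0 := by positivity
  have h2a : Real.sqrt (2*c*s) = 2*a := by
    rw [show 2*c*s = (2*a)^2 by linear_combination -4*ha2,
      Real.sqrt_sq (by positivity : (0:ℝ) ≤ 2*a)]
  rw [h2a, ← mul_assoc]
  have hone : 2/Real.sqrt Real.pi * (Real.sqrt Real.pi/2) = 1 := by field_simp
  rw [hone, one_mul]

lemma glasser_integrableOn (a : ℝ) :
    IntegrableOn (fun u : ℝ => Real.exp (-(u^2 + a^2/u^2))) (Ioi 0) := by
  have hgcont : ContinuousOn (fun u : ℝ => Real.exp (-(u^2 + a^2/u^2))) (Ioi 0) := by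
    apply ContinuousOn.rexp
    apply ContinuousOn.neg
    apply ContinuousOn.add (continuousOn_pow 2)
    exact continuousOn_const.div (continuousOn_pow 2)
      (fun x hx => pow_ne_zero _ (ne_of_gt hx))
  apply Integrable.mono ((integrable_exp_neg_mul_sq one_pos).integrableOn (s := Ioi 0))
  · exact hgcont.aestronglyMeasurable measurableSet_Ioi
  · filter_upwards [ae_restrict_mem measurableSet_Ioi] with u hu
    rw [Real.norm_eq_abs, Real.norm_eq_abs, abs_of_pos (Real.exp_pos _),
      abs_of_pos (Real.exp_pos _), Real.exp_le_exp]
    have : 0 ≤ a^2/u^2 := by positivity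
    nlinarith

lemma levyPDF_integrableOn (c : ℝ) (hc : 0 < c) : IntegrableOn (levyPDF c) (Ioi 0) := by
  have himg : (fun u : ℝ => c/2 * (u^2)⁻¹) '' Ioi 0 = Ioi 0 := by
    ext t
    constructor
    · rintro ⟨u, hu, rfl⟩
      have hu0 : (0:ℝ) < u := hu
      have : (0:ℝ) < c/2 * (u^2)⁻¹ := by positivity
      exact this
    · intro ht
      have ht0 : (0:ℝ) < t := ht
      refine ⟨Real.sqrt (c/(2*t)), Real.sqrt_pos.mpr (by positivity), ?_⟩
      have h2 : Real.sqrt (c/(2*t)) ^ 2 = c/(2*t) := Real.sq_sqrt (by positivity)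
      simp only [h2]
      field_simp
  have hd : ∀ x ∈ Ioi (0:ℝ),
      HasDerivWithinAt (fun u : ℝ => c/2 * (u^2)⁻¹) (-c/x^3) (Ioi 0) x := by
    intro x hx
    have hx0 : x ≠ 0 := ne_of_gt (show (0:ℝ) < x from hx)
    have h1 := ((hasDerivAt_pow 2 x).inv (pow_ne_zero 2 hx0)).const_mul (c/2)
    have := h1.hasDerivWithinAt (s := Ioi 0)
    refine this.congr_deriv ?_
    field_simp
    ring
  have hinj : InjOn (fun u : ℝ => c/2 * (u^2)⁻¹) (Ioi 0) := by
    intro u hu v hv h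
    have hu0 : (0:ℝ) < u := hu
    have hv0 : (0:ℝ) < v := hv
    simp only at h
    have h2 : u^2 = v^2 := by
      have hc2 : c/2 ≠ 0 := by positivity
      have := mul_left_cancel₀ hc2 h
      exact inv_injective this
    have : (u - v) * (u + v) = 0 := by linear_combination h2
    rcases mul_eq_zero.mp this with h3 | h3
    · linarith [sub_eq_zero.mp h3]
    · linarith
  have hiff := integrableOn_image_iff_integrableOn_abs_deriv_smul
    measurableSet_Ioi hd hinj (levyPDF c)
  rw [himg] at hiff
  apply hiff.mpr
  apply IntegrableOn.congr_fun ((glasser_integrableOn 0).const_mul (2/Real.sqrt Real.pi))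
    ?_ measurableSet_Ioi
  intro u hu
  have hu0 : (0:ℝ) < u := hu
  have ht0 : (0:ℝ) < c/2 * (u^2)⁻¹ := by positivity
  have habs : |(-c/u^3)| = c/u^3 := by
    rw [abs_div, abs_neg, abs_of_pos hc, abs_of_pos (by positivity : (0:ℝ) < u^3)]
  simp only [smul_eq_mul]
  rw [habs, levyPDF, if_pos ht0]
  have e1 : -c / (2 * (c/2 * (u^2)⁻¹)) = -(u^2) := by field_simp
  have e2 : c / (2 * Real.pi * (c/2 * (u^2)⁻¹)^3) = (2*u^3/c)^2 / Real.pi := by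
    rw [div_eq_div_iff (by positivity) (ne_of_gt Real.pi_pos)]
    field_simp
  have e4 : Real.sqrt ((2*u^3/c)^2/Real.pi) = (2*u^3/c)/Real.sqrt Real.pi := by
    rw [Real.sqrt_div (sq_nonneg _), Real.sqrt_sq (by positivity : (0:ℝ) ≤ 2*u^3/c)]
  rw [e1, e2, e4]
  have hz : ((0:ℝ)^2/u^2) = 0 := by
    norm_num
  rw [hz, add_zero]
  have hpi : Real.sqrt Real.pi ≠ 0 := by positivity
  field_simp




lemma levyPDF_nonneg (c x : ℝ) : 0 ≤ levyPDF c x := by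
  unfold levyPDF
  split
  · positivity
  · exact le_refl 0

lemma levyPDF_measurable (c : ℝ) : Measurable (levyPDF c) := by
  unfold levyPDF
  apply Measurable.ite measurableSet_Ioi _ measurable_const
  apply Measurable.mul
  · apply Measurable.sqrt
    exact measurable_const.div ((measurable_const.mul (measurable_id.pow_const 3)))
  · exact (measurable_const.div (measurable_const.mul measurable_id)).exp

noncomputable def Flevy (c : ℝ) (z : ℂ) : ℂ :=
  ∫ t in Ioi (0:ℝ), (levyPDF c t : ℂ) * Complex.exp (-z * t)

noncomputable def glevy (c : ℝ) (z : ℂ) : ℂ :=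
  Complex.exp (-((2 * c : ℂ) * z) ^ (1/2 : ℂ))

lemma levy_integrand_meas (c : ℝ) (z : ℂ) :
    AEStronglyMeasurable (fun t : ℝ => (levyPDF c t : ℂ) * Complex.exp (-z * t))
      (volume.restrict (Ioi 0)) := by
  apply Measurable.aestronglyMeasurable
  apply Measurable.mul
  · exact Complex.measurable_ofReal.comp (levyPDF_measurable c)
  · exact (Complex.continuous_exp.comp (by continuity)).measurable

lemma levy_norm_integrand (c : ℝ) (z : ℂ) (t : ℝ) (ht : 0 ≤ t) (hz : 0 ≤ z.re) :
    ‖(levyPDF c t : ℂ) * Complex.exp (-z * t)‖ ≤ levyPDF c t := by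
  rw [norm_mul, Complex.norm_real, Real.norm_eq_abs, abs_of_nonneg (levyPDF_nonneg c t),
    Complex.norm_exp]
  have hre : (-z * (t:ℂ)).re = -(z.re * t) := by
    simp [Complex.mul_re]
  rw [hre]
  have h1 : Real.exp (-(z.re * t)) ≤ 1 := Real.exp_le_one_iff.mpr (by nlinarith)
  nlinarith [levyPDF_nonneg c t, Real.exp_pos (-(z.re*t))]

lemma Flevy_integrable (c : ℝ) (hc : 0 < c) (z : ℂ) (hz : 0 ≤ z.re) :
    IntegrableOn (fun t : ℝ => (levyPDF c t : ℂ) * Complex.exp (-z * t)) (Ioi 0) := by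
  apply Integrable.mono (levyPDF_integrableOn c hc) (levy_integrand_meas c z)
  filter_upwards [ae_restrict_mem measurableSet_Ioi] with t ht
  rw [Real.norm_eq_abs, abs_of_nonneg (levyPDF_nonneg c t)]
  exact levy_norm_integrand c z t (le_of_lt ht) hz

lemma Flevy_real (c : ℝ) (hc : 0 < c) (s : ℝ) (hs : 0 ≤ s) :
    Flevy c (s : ℂ) = ((Real.exp (-Real.sqrt (2*c*s)) : ℝ) : ℂ) := by
  unfold Flevy
  have : ∀ t : ℝ, (levyPDF c t : ℂ) * Complex.exp (-(s:ℂ) * t)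
      = ((levyPDF c t * Real.exp (-(s*t)) : ℝ) : ℂ) := by
    intro t
    push_cast [Complex.ofReal_exp]
    ring_nf
  simp_rw [this]
  exact (integral_ofReal (𝕜 := ℂ)).trans (congrArg Complex.ofReal (levy_laplace c hc s hs))

lemma levyPDF_mul_t_le (c : ℝ) (hc : 0 < c) (t : ℝ) (ht : 0 < t) :
    levyPDF c t * t ≤ Real.sqrt (c/(2*Real.pi)) * t ^ (-(1:ℝ)/2) := by
  have h3 : Real.sqrt ((t^3)⁻¹) = t ^ (-(3:ℝ)/2) := by
    rw [Real.sqrt_inv, Real.sqrt_eq_rpow, ← Real.rpow_natCast t 3,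
      ← Real.rpow_mul (le_of_lt ht), ← Real.rpow_neg (le_of_lt ht)]
    norm_num
  have hsplit : c / (2*Real.pi*t^3) = (c/(2*Real.pi)) * (t^3)⁻¹ := by ring
  have hsq : Real.sqrt (c / (2*Real.pi*t^3)) = Real.sqrt (c/(2*Real.pi)) * t ^ (-(3:ℝ)/2) := by
    rw [hsplit, Real.sqrt_mul (by positivity), h3]
  have hrw : t ^ (-(3:ℝ)/2) * t = t ^ (-(1:ℝ)/2) := by
    calc t ^ (-(3:ℝ)/2) * t = t ^ (-(3:ℝ)/2) * t ^ (1:ℝ) := by rw [Real.rpow_one]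
    _ = t ^ (-(3:ℝ)/2 + 1) := (Real.rpow_add ht _ _).symm
    _ = t ^ (-(1:ℝ)/2) := by norm_num
  rw [levyPDF, if_pos ht, hsq]
  have hexp : Real.exp (-c/(2*t)) ≤ 1 := by
    apply Real.exp_le_one_iff.mpr
    rw [neg_div]
    exact neg_nonpos_of_nonneg (by positivity)
  calc Real.sqrt (c/(2*Real.pi)) * t ^ (-(3:ℝ)/2) * Real.exp (-c/(2*t)) * t
      ≤ Real.sqrt (c/(2*Real.pi)) * t ^ (-(3:ℝ)/2) * 1 * t := by
        apply mul_le_mul_of_nonneg_right _ (le_of_lt ht)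
        apply mul_le_mul_of_nonneg_left hexp (by positivity)
    _ = Real.sqrt (c/(2*Real.pi)) * (t ^ (-(3:ℝ)/2) * t) := by ring
    _ = Real.sqrt (c/(2*Real.pi)) * t ^ (-(1:ℝ)/2) := by rw [hrw]

lemma levy_bound_integrable (c : ℝ) (b : ℝ) (hb : 0 < b) :
    IntegrableOn (fun t : ℝ => Real.sqrt (c/(2*Real.pi)) *
      (t ^ (-(1:ℝ)/2) * Real.exp (-b * t))) (Ioi 0) := by
  apply Integrable.const_mul
  have h := integrableOn_rpow_mul_exp_neg_mul_rpow
    (show (-1:ℝ) < -(1:ℝ)/2 by norm_num) (by norm_num : (0:ℝ) < 1) hb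
  simpa [Real.rpow_one, IntegrableOn] using h

lemma Flevy_hasDerivAt (c : ℝ) (hc : 0 < c) (z₀ : ℂ) (hz₀ : 0 < z₀.re) :
    DifferentiableAt ℂ (Flevy c) z₀ := by
  set ε := z₀.re/2 with hε
  have hεpos : 0 < ε := by positivity
  set bound : ℝ → ℝ := fun t => Real.sqrt (c/(2*Real.pi)) *
    (t ^ (-(1:ℝ)/2) * Real.exp (-(z₀.re/2) * t)) with hbound
  have key := hasDerivAt_integral_of_dominated_loc_of_deriv_le (μ := volume.restrict (Ioi 0))
    (F := fun z t => (levyPDF c t : ℂ) * Complex.exp (-z * t))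
    (F' := fun z t => (levyPDF c t : ℂ) * (Complex.exp (-z * t) * (-(t:ℂ))))
    (x₀ := z₀) (bound := bound) (Metric.ball_mem_nhds z₀ hεpos)
    (Eventually.of_forall fun z => levy_integrand_meas c z)
    (Flevy_integrable c hc z₀ (le_of_lt hz₀))
    ?_ ?_ ?_ ?_
  · exact key.2.differentiableAt
  · -- measurability of F' z₀
    apply Measurable.aestronglyMeasurable
    apply Measurable.mul
    · exact Complex.measurable_ofReal.comp (levyPDF_measurable c)
    · apply Measurable.mul
      · exact (Complex.continuous_exp.comp (by continuity)).measurable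
      · exact (Complex.continuous_ofReal.measurable).neg
  · -- bound
    filter_upwards [ae_restrict_mem measurableSet_Ioi] with t ht z hz
    have ht0 : (0:ℝ) < t := ht
    have hzre : z₀.re/2 ≤ z.re := by
      have h1 : |(z - z₀).re| ≤ ‖z - z₀‖ := Complex.abs_re_le_norm _
      rw [Metric.mem_ball, Complex.dist_eq] at hz
      have h2 : |(z - z₀).re| < ε := lt_of_le_of_lt h1 hz
      rw [Complex.sub_re, abs_lt] at h2
      linarith [h2.1]
    rw [norm_mul, norm_mul, Complex.norm_real, Real.norm_eq_abs,
      abs_of_nonneg (levyPDF_nonneg c t), norm_neg, Complex.norm_real, Real.norm_eq_abs,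
      abs_of_pos ht0, Complex.norm_exp]
    have hre : (-z * (t:ℂ)).re = -(z.re * t) := by simp [Complex.mul_re]
    rw [hre]
    have e1 : Real.exp (-(z.re*t)) ≤ Real.exp (-(z₀.re/2) * t) := by
      apply Real.exp_le_exp.mpr
      nlinarith
    calc levyPDF c t * (Real.exp (-(z.re*t)) * t)
        ≤ levyPDF c t * (Real.exp (-(z₀.re/2)*t) * t) := by
          apply mul_le_mul_of_nonneg_left _ (levyPDF_nonneg c t)
          exact mul_le_mul_of_nonneg_right e1 (le_of_lt ht0)
      _ = (levyPDF c t * t) * Real.exp (-(z₀.re/2)*t) := by ring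
      _ ≤ (Real.sqrt (c/(2*Real.pi)) * t ^ (-(1:ℝ)/2)) * Real.exp (-(z₀.re/2)*t) := by
          apply mul_le_mul_of_nonneg_right (levyPDF_mul_t_le c hc t ht0) (le_of_lt (Real.exp_pos _))
      _ = bound t := by rw [hbound]; ring
  · -- bound integrable
    exact levy_bound_integrable c (z₀.re/2) (by positivity)
  · -- differentiability pointwise
    filter_upwards with t
    intro z hz
    have h1 : HasDerivAt (fun z : ℂ => -z * (t:ℂ)) (-(t:ℂ)) z := by
      simpa using ((hasDerivAt_id z).neg.mul_const (t:ℂ))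
    exact (h1.cexp).const_mul _

lemma glevy_real (c : ℝ) (hc : 0 < c) (s : ℝ) (hs : 0 < s) :
    glevy c (s : ℂ) = ((Real.exp (-Real.sqrt (2*c*s)) : ℝ) : ℂ) := by
  unfold glevy
  have h1 : (2 * (c:ℂ)) * (s:ℂ) = ((2*c*s : ℝ) : ℂ) := by push_cast; ring
  have h2 : ((2*c*s : ℝ):ℂ) ^ (1/2 : ℂ) = ((Real.sqrt (2*c*s) : ℝ) : ℂ) := by
    rw [show (1/2 : ℂ) = ((1/2 : ℝ) : ℂ) by norm_num,
      ← Complex.ofReal_cpow (by positivity : (0:ℝ) ≤ 2*c*s),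
      Real.rpow_def_of_pos (by positivity)]
    rw [Real.sqrt_eq_rpow, Real.rpow_def_of_pos (by positivity)]
  rw [h1, h2, ← Complex.ofReal_neg, ← Complex.ofReal_exp]

lemma glevy_diff (c : ℝ) (hc : 0 < c) (z : ℂ) (hz : 0 < z.re) :
    DifferentiableAt ℂ (glevy c) z := by
  have hslit : (2 * (c:ℂ)) * z ∈ Complex.slitPlane := by
    rw [Complex.mem_slitPlane_iff]
    left
    rw [show (2 * (c:ℂ)) * z = ((2*c : ℝ) : ℂ) * z by push_cast; ring,
      Complex.re_ofReal_mul]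
    positivity
  have h1 : DifferentiableAt ℂ (fun w : ℂ => ((2 * (c:ℂ)) * w) ^ (1/2 : ℂ)) z :=
    ((differentiableAt_const _).mul differentiableAt_id).cpow (differentiableAt_const _) hslit
  exact (h1.neg).cexp

lemma Flevy_eq_glevy (c : ℝ) (hc : 0 < c) :
    EqOn (Flevy c) (glevy c) {z : ℂ | 0 < z.re} := by
  have hU : IsOpen {z : ℂ | 0 < z.re} := isOpen_lt continuous_const Complex.continuous_re
  have hFd : DifferentiableOn ℂ (Flevy c) {z : ℂ | 0 < z.re} :=
    fun z hz => (Flevy_hasDerivAt c hc z hz).differentiableWithinAt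
  have hgd : DifferentiableOn ℂ (glevy c) {z : ℂ | 0 < z.re} :=
    fun z hz => (glevy_diff c hc z hz).differentiableWithinAt
  have hFa := hFd.analyticOnNhd hU
  have hga := hgd.analyticOnNhd hU
  have hconn : IsPreconnected {z : ℂ | 0 < z.re} :=
    (convex_halfSpace_re_gt 0).isPreconnected
  have h1 : (1:ℂ) ∈ {z : ℂ | 0 < z.re} := by simp
  apply hFa.eqOn_of_preconnected_of_frequently_eq hga hconn h1
  -- frequently equal near 1
  have heq : ∀ n : ℕ, Flevy c ((1 + 1/(n+1) : ℝ) : ℂ) = glevy c ((1 + 1/(n+1) : ℝ) : ℂ) := by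
    intro n
    have hpos : (0:ℝ) < 1 + 1/(n+1) := by positivity
    rw [Flevy_real c hc _ (le_of_lt hpos), glevy_real c hc _ hpos]
  have htend : Tendsto (fun n : ℕ => (((1 + 1/(n+1) : ℝ)) : ℂ)) atTop (𝓝[≠] (1:ℂ)) := by
    apply tendsto_nhdsWithin_of_tendsto_nhds_of_eventually_within
    · have h0 : Tendsto (fun n : ℕ => (1 + 1/(n+1) : ℝ)) atTop (𝓝 1) := by
        have := tendsto_one_div_add_atTop_nhds_zero_nat (𝕜 := ℝ)
        simpa using this.const_add 1
      have h1 := (Complex.continuous_ofReal.tendsto (1:ℝ)).comp h0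
      simpa [Function.comp_def] using h1
    · filter_upwards with n
      simp only [mem_compl_iff, mem_singleton_iff]
      intro h
      rw [show ((1:ℂ)) = ((1:ℝ):ℂ) by norm_num] at h
      have := Complex.ofReal_injective h
      have hp : (0:ℝ) < 1/(n+1) := by positivity
      linarith
  exact htend.frequently (Frequently.of_forall heq)

lemma levy_charFun_aux (c : ℝ) (hc : 0 < c) (z : ℂ) (hz : 0 ≤ z.re) :
    Flevy c z = glevy c z := by
  rcases lt_or_eq_of_le hz with hz' | hz'
  · exact Flevy_eq_glevy c hc hz'
  · -- z.re = 0
    by_cases hz0 : z = 0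
    · subst hz0
      have hF : Flevy c 0 = 1 := by
        have := Flevy_real c hc 0 (le_refl 0)
        simpa using this
      have hg : glevy c 0 = 1 := by
        unfold glevy
        rw [mul_zero, Complex.zero_cpow (by norm_num : (1/2:ℂ) ≠ 0), neg_zero, Complex.exp_zero]
      rw [hF, hg]
    · have him : z.im ≠ 0 := by
        intro h
        apply hz0
        apply Complex.ext
        · exact hz'.symm
        · simpa using h
      set zn : ℕ → ℂ := fun n => z + ((1/(n+1) : ℝ) : ℂ) with hzn
      have hznre : ∀ n, (zn n).re = 1/(n+1) := by
        intro n
        rw [hzn]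
        simp only
        rw [Complex.add_re, Complex.ofReal_re, ← hz', zero_add]
      have hznpos : ∀ n : ℕ, (0:ℝ) < (zn n).re := by
        intro n; rw [hznre]; positivity
      have hzntend : Tendsto zn atTop (𝓝 z) := by
        have h0 : Tendsto (fun n : ℕ => (1/(n+1) : ℝ)) atTop (𝓝 0) :=
          tendsto_one_div_add_atTop_nhds_zero_nat
        have h1 : Tendsto (fun n : ℕ => ((1/(n+1) : ℝ) : ℂ)) atTop (𝓝 0) := by
          have h2 := (Complex.continuous_ofReal.tendsto (0:ℝ)).comp h0
          simpa [Function.comp_def] using h2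
        have h3 := h1.const_add z
        show Tendsto (fun n : ℕ => z + ((1/(n+1) : ℝ) : ℂ)) atTop (𝓝 z)
        simpa using h3
      -- F(zn) → F(z)
      have hFt : Tendsto (fun n => Flevy c (zn n)) atTop (𝓝 (Flevy c z)) := by
        unfold Flevy
        apply tendsto_integral_filter_of_dominated_convergence (levyPDF c)
        · exact Eventually.of_forall fun n => levy_integrand_meas c _
        · apply Eventually.of_forall
          intro n
          filter_upwards [ae_restrict_mem measurableSet_Ioi] with t ht
          exact levy_norm_integrand c (zn n) t (le_of_lt ht) (le_of_lt (hznpos n))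
        · exact levyPDF_integrableOn c hc
        · filter_upwards [ae_restrict_mem measurableSet_Ioi] with t ht
          apply Tendsto.const_mul
          apply (Complex.continuous_exp.tendsto _).comp
          have := (hzntend.neg).mul_const (t:ℂ)
          exact this
      -- g(zn) → g(z)
      have hgt : Tendsto (fun n => glevy c (zn n)) atTop (𝓝 (glevy c z)) := by
        have hslit : (2 * (c:ℂ)) * z ∈ Complex.slitPlane := by
          rw [Complex.mem_slitPlane_iff]
          right
          rw [show (2 * (c:ℂ)) * z = ((2*c : ℝ) : ℂ) * z by push_cast; ring,
            Complex.im_ofReal_mul]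
          intro h
          rcases mul_eq_zero.mp h with h1 | h1
          · exact absurd h1 (by positivity)
          · exact him h1
        have hcont : ContinuousAt (glevy c) z := by
          apply ContinuousAt.comp Complex.continuous_exp.continuousAt
          apply ContinuousAt.neg
          exact (continuousAt_cpow_const hslit).comp
            ((continuous_const.mul continuous_id).continuousAt)
        exact hcont.tendsto.comp hzntend
      have heqn : ∀ n, Flevy c (zn n) = glevy c (zn n) :=
        fun n => Flevy_eq_glevy c hc (hznpos n)
      have hFt' : Tendsto (fun n => glevy c (zn n)) atTop (𝓝 (Flevy c z)) := by
        apply hFt.congr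
        intro n; exact heqn n
      exact tendsto_nhds_unique hFt' hgt

lemma cpow_half_mul_I_pos (y : ℝ) (hy : 0 < y) :
    ((y:ℂ) * Complex.I) ^ (1/2 : ℂ) = (Real.sqrt y : ℂ) * Complex.exp ((Real.pi:ℂ)/4 * Complex.I) := by
  have hne : (y:ℂ) * Complex.I ≠ 0 := by
    simp [Complex.ext_iff, ne_of_gt hy]
  rw [Complex.cpow_def_of_ne_zero hne]
  have harg : Complex.arg ((y:ℂ) * Complex.I) = Real.pi/2 := by
    rw [Complex.arg_eq_pi_div_two_iff]
    constructor
    · simp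
    · simpa using hy
  have habs : ‖(y:ℂ) * Complex.I‖ = y := by
    rw [norm_mul, Complex.norm_I, Complex.norm_real, Real.norm_eq_abs, abs_of_pos hy, mul_one]
  rw [Complex.log, habs, harg]
  have : (↑(Real.log y) + ↑(Real.pi/2) * Complex.I) * (1/2 : ℂ)
      = ↑(Real.log y / 2) + (Real.pi:ℂ)/4 * Complex.I := by
    push_cast; ring
  rw [this, Complex.exp_add]
  congr 1
  rw [← Complex.ofReal_exp]
  congr 1
  rw [Real.sqrt_eq_rpow, Real.rpow_def_of_pos hy]
  ring_nf

lemma cpow_half_sum (y : ℝ) :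
    ((y:ℂ) * Complex.I) ^ (1/2 : ℂ) + (-((y:ℂ) * Complex.I)) ^ (1/2 : ℂ)
      = ((Real.sqrt (2*|y|) : ℝ) : ℂ) := by
  have hpos : ∀ w : ℝ, 0 < w →
      ((w:ℂ) * Complex.I) ^ (1/2 : ℂ) + (-((w:ℂ) * Complex.I)) ^ (1/2 : ℂ)
        = ((Real.sqrt (2*w) : ℝ) : ℂ) := by
    intro w hw
    have h1 := cpow_half_mul_I_pos w hw
    have hne : -((w:ℂ) * Complex.I) ≠ 0 := by
      simp [Complex.ext_iff, ne_of_gt hw]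
    have h2 : (-((w:ℂ) * Complex.I)) ^ (1/2 : ℂ)
        = (Real.sqrt w : ℂ) * Complex.exp (-((Real.pi:ℂ)/4) * Complex.I) := by
      rw [Complex.cpow_def_of_ne_zero hne]
      have harg : Complex.arg (-((w:ℂ) * Complex.I)) = -(Real.pi/2) := by
        rw [Complex.arg_eq_neg_pi_div_two_iff]
        constructor
        · simp
        · simpa using hw
      have habs : ‖-((w:ℂ) * Complex.I)‖ = w := by
        rw [norm_neg, norm_mul, Complex.norm_I, Complex.norm_real, Real.norm_eq_abs, abs_of_pos hw, mul_one]
      rw [Complex.log, habs, harg]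
      have : (↑(Real.log w) + ↑(-(Real.pi/2)) * Complex.I) * (1/2 : ℂ)
          = ↑(Real.log w / 2) + -((Real.pi:ℂ)/4) * Complex.I := by
        push_cast; ring
      rw [this, Complex.exp_add]
      congr 1
      rw [← Complex.ofReal_exp]
      congr 1
      rw [Real.sqrt_eq_rpow, Real.rpow_def_of_pos hw]
      ring_nf
    rw [h1, h2]
    have hsum : Complex.exp ((Real.pi:ℂ)/4 * Complex.I)
        + Complex.exp (-((Real.pi:ℂ)/4) * Complex.I) = ((Real.sqrt 2 : ℝ) : ℂ) := by
      rw [show ((Real.pi:ℂ)/4) = ((Real.pi/4 : ℝ) : ℂ) by push_cast; ring,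
        show (-(((Real.pi/4:ℝ)):ℂ)) = ((-(Real.pi/4) : ℝ) : ℂ) by push_cast; ring]
      rw [Complex.exp_mul_I, Complex.exp_mul_I, ← Complex.ofReal_cos, ← Complex.ofReal_sin,
        ← Complex.ofReal_cos, ← Complex.ofReal_sin, Real.cos_neg, Real.sin_neg,
        Real.cos_pi_div_four, Real.sin_pi_div_four]
      push_cast
      ring
    calc (↑(Real.sqrt w) : ℂ) * Complex.exp ((Real.pi:ℂ)/4 * Complex.I)
          + (↑(Real.sqrt w) : ℂ) * Complex.exp (-((Real.pi:ℂ)/4) * Complex.I)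
        = (↑(Real.sqrt w) : ℂ) * (Complex.exp ((Real.pi:ℂ)/4 * Complex.I)
            + Complex.exp (-((Real.pi:ℂ)/4) * Complex.I)) := by ring
      _ = (↑(Real.sqrt w) : ℂ) * ((Real.sqrt 2 : ℝ) : ℂ) := by rw [hsum]
      _ = ((Real.sqrt (2*w) : ℝ) : ℂ) := by
          rw [← Complex.ofReal_mul]
          congr 1
          rw [Real.sqrt_mul (by norm_num : (0:ℝ) ≤ 2) w]
          ring
  rcases lt_trichotomy y 0 with hy | hy | hy
  · have h := hpos (-y) (by linarith)
    rw [show ((-y:ℝ):ℂ) * Complex.I = -((y:ℂ) * Complex.I) by push_cast; ring] at h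
    rw [neg_neg] at h
    rw [add_comm] at h
    rw [h, abs_of_neg hy]
  · subst hy
    simp [Complex.zero_cpow (show (1/2:ℂ) ≠ 0 by norm_num)]
  · have h := hpos y hy
    rw [h, abs_of_pos hy]






/-- Theorem 1: the characteristic function of the system B noise `L_n = T₂ - T₁`,
with `T₁, T₂` i.i.d. Lévy with scale `c`, equals `exp(-2√(c|ω|)) = exp(-√(c_B|ω|))`
with `c_B = 4c`; in particular it is real and symmetric in `ω`. -/
theorem systemB_noise_charFun (c : ℝ) (hc : 0 < c) :
    (∀ ω : ℝ,
      (∫ t₂ in Set.Ioi (0:ℝ), ∫ t₁ in Set.Ioi (0:ℝ),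
          Complex.exp (Complex.I * ω * (t₂ - t₁)) * (levyPDF c t₂ : ℂ) * (levyPDF c t₁ : ℂ))
        = Complex.exp (-(2 * Real.sqrt (c * |ω|) : ℝ)))
    ∧ (∀ ω : ℝ, (2 * Real.sqrt (c * |ω|) : ℝ) = Real.sqrt ((4 * c) * |ω|))
    ∧ (∀ ω : ℝ, Complex.exp (-(2 * Real.sqrt (c * |ω|) : ℝ))
        = Complex.exp (-(2 * Real.sqrt (c * |(-ω)|) : ℝ))) := by
  have sqrt4 : Real.sqrt 4 = 2 := by
    rw [show (4:ℝ) = 2^2 by norm_num, Real.sqrt_sq (by norm_num : (0:ℝ) ≤ 2)]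
  have part2 : ∀ ω : ℝ, (2 * Real.sqrt (c * |ω|) : ℝ) = Real.sqrt ((4 * c) * |ω|) := by
    intro ω
    rw [show (4*c)*|ω| = 4*(c*|ω|) by ring, Real.sqrt_mul (by norm_num : (0:ℝ) ≤ 4), sqrt4]
  refine ⟨?_, part2, ?_⟩
  · intro ω
    have hre1 : (Complex.I * (ω:ℂ)).re = 0 := by simp
    have hre2 : (-(Complex.I * (ω:ℂ))).re = 0 := by simp
    have hid : ∀ t₂ : ℝ, (∫ t₁ in Ioi (0:ℝ),
        Complex.exp (Complex.I * ω * ((t₂:ℂ) - (t₁:ℂ))) * (levyPDF c t₂ : ℂ) * (levyPDF c t₁ : ℂ))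
        = (Complex.exp (Complex.I * ω * t₂) * (levyPDF c t₂ : ℂ)) * Flevy c (Complex.I * ω) := by
      intro t₂
      rw [Flevy, ← MeasureTheory.integral_const_mul]
      apply setIntegral_congr_fun measurableSet_Ioi
      intro t₁ _
      simp only
      rw [show Complex.I * ω * ((t₂:ℂ) - (t₁:ℂ))
          = Complex.I * ω * t₂ + (-(Complex.I * (ω:ℂ)) * t₁) by ring, Complex.exp_add]
      ring
    calc (∫ t₂ in Set.Ioi (0:ℝ), ∫ t₁ in Set.Ioi (0:ℝ),
          Complex.exp (Complex.I * ω * (t₂ - t₁)) * (levyPDF c t₂ : ℂ) * (levyPDF c t₁ : ℂ))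
        = ∫ t₂ in Ioi (0:ℝ),
            (Complex.exp (Complex.I * ω * t₂) * (levyPDF c t₂ : ℂ)) * Flevy c (Complex.I * ω) :=
          setIntegral_congr_fun measurableSet_Ioi (fun t₂ _ => hid t₂)
      _ = (∫ t₂ in Ioi (0:ℝ), Complex.exp (Complex.I * ω * t₂) * (levyPDF c t₂ : ℂ))
            * Flevy c (Complex.I * ω) := by rw [MeasureTheory.integral_mul_const]
      _ = Flevy c (-(Complex.I * ω)) * Flevy c (Complex.I * ω) := by
          congr 1
          rw [Flevy]
          apply setIntegral_congr_fun measurableSet_Ioi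
          intro t _
          simp only
          rw [mul_comm]
          congr 1
          ring
      _ = glevy c (-(Complex.I * ω)) * glevy c (Complex.I * ω) := by
          rw [levy_charFun_aux c hc _ (le_of_eq hre2.symm),
            levy_charFun_aux c hc _ (le_of_eq hre1.symm)]
      _ = Complex.exp (-(2 * Real.sqrt (c * |ω|) : ℝ)) := by
          rw [glevy, glevy, ← Complex.exp_add]
          congr 1
          rw [show (2 * (c:ℂ)) * (Complex.I * ω) = ((2*c*ω : ℝ) : ℂ) * Complex.I by
              push_cast; ring,
            show (2 * (c:ℂ)) * (-(Complex.I * ω)) = -(((2*c*ω : ℝ) : ℂ) * Complex.I) by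
              push_cast; ring]
          rw [← neg_add, add_comm, cpow_half_sum (2*c*ω)]
          congr 1
          rw [show |2*c*ω| = 2*c*|ω| by rw [abs_mul, abs_mul]; simp [abs_of_pos hc], part2 ω]
          push_cast
          congr 1
          rw [show 2*(2*c*|ω|) = (4*c)*|ω| by ring]
  · intro ω
    rw [abs_neg]
end

section
/- (Theorem 4, case z = 0) Let c_a > 0 and c_b > 0. The density of Z_n = T_b − T_a (with T_a, T_b independent Lévy of scales c_a, c_b) evaluated at 0 satisfies ∫₀^∞ f_{c_a}(t) · f_{c_b}(t) dt = 2√(c_a c_b) / (π (c_a + c_b)²). Equivalently, with c_C = (√c_a + √c_b)² and β = (√c_b − √c_a)/(√c_a + √c_b), this value equals 2(1 − β²)/(c_C π (1 + β²)²). -/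
open MeasureTheory Set

open Filter in
private lemma aux_int (k : ℝ) (hk : 0 < k) :
    ∫ t in Set.Ioi (0:ℝ), Real.exp (-k / t) / t ^ 3 = 1 / k ^ 2 := by
  set F : ℝ → ℝ := fun t => if t ≤ 0 then 0 else Real.exp (-k / t) * (1 / (k * t) + 1 / k ^ 2)
    with hF
  have hFeq : ∀ x : ℝ, 0 < x → F x = Real.exp (-k / x) * (1 / (k * x) + 1 / k ^ 2) := by
    intro x hx; simp [hF, not_le.2 hx]
  have hderiv : ∀ x ∈ Ioi (0:ℝ), HasDerivAt F (Real.exp (-k / x) / x ^ 3) x := by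
    intro x hx
    have hx : 0 < x := hx
    have h1 : HasDerivAt (fun t : ℝ => -k / t) (k / x ^ 2) x := by
      simpa [div_eq_mul_inv] using (hasDerivAt_inv hx.ne').const_mul (-k)
    have h2 : HasDerivAt (fun t : ℝ => Real.exp (-k / t)) (Real.exp (-k / x) * (k / x ^ 2)) x :=
      (Real.hasDerivAt_exp _).comp x h1
    have h3 : HasDerivAt (fun t : ℝ => 1 / (k * t) + 1 / k ^ 2) (-1 / (k * x ^ 2)) x := by
      have hkx : k * x ≠ 0 := by positivity
      have hmul : HasDerivAt (fun t : ℝ => k * t) k x := by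
        simpa using (hasDerivAt_id x).const_mul k
      have h := ((hasDerivAt_inv hkx).comp x hmul).add_const (1 / k ^ 2)
      have e : -((k * x) ^ 2)⁻¹ * k = -1 / (k * x ^ 2) := by
        field_simp
      rw [e] at h
      simpa [Function.comp, one_div] using h
    have h4 := h2.mul h3
    have heq : (fun t => Real.exp (-k / t) * (1 / (k * t) + 1 / k ^ 2)) =ᶠ[nhds x] F := by
      filter_upwards [eventually_gt_nhds hx] with t ht
      exact (hFeq t ht).symm
    have h5 := h4.congr_of_eventuallyEq heq.symm
    convert h5 using 1
    · rfl
    · rfl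
    field_simp
    ring
  have g'pos : ∀ x ∈ Ioi (0:ℝ), 0 ≤ Real.exp (-k / x) / x ^ 3 := fun x hx => by
    have : (0:ℝ) < x := hx; positivity
  have htop : Tendsto F atTop (nhds (1 / k ^ 2)) := by
    have ha : Tendsto (fun t : ℝ => -k / t) atTop (nhds 0) :=
      tendsto_const_nhds.div_atTop tendsto_id
    have hb : Tendsto (fun t : ℝ => 1 / (k * t)) atTop (nhds 0) :=
      tendsto_const_nhds.div_atTop (tendsto_id.const_mul_atTop hk)
    have h1 := ((Real.continuous_exp.tendsto 0).comp ha).mul (hb.add (tendsto_const_nhds (x := 1 / k ^ 2)))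
    simp only [Function.comp, Real.exp_zero, one_mul, zero_add] at h1
    refine h1.congr' ?_
    filter_upwards [eventually_gt_atTop 0] with t ht
    exact (hFeq t ht).symm
  have h0 : F 0 = 0 := by simp [hF]
  have hcont : ContinuousWithinAt F (Ici (0:ℝ)) 0 := by
    rw [ContinuousWithinAt, h0]
    have key : Tendsto (fun u : ℝ => Real.exp (-(k * u)) * (u / k + 1 / k ^ 2)) atTop
        (nhds 0) := by
      have h1 : Tendsto (fun u : ℝ => (k * u) * Real.exp (-(k * u))) atTop (nhds 0) := by
        have := Real.tendsto_pow_mul_exp_neg_atTop_nhds_zero 1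
        simp only [pow_one] at this
        exact this.comp (tendsto_id.const_mul_atTop hk)
      have h2 : Tendsto (fun u : ℝ => Real.exp (-(k * u))) atTop (nhds 0) :=
        Real.tendsto_exp_atBot.comp (tendsto_neg_atTop_atBot.comp (tendsto_id.const_mul_atTop hk))
      have h3 := (h1.const_mul (1 / k ^ 2)).add (h2.const_mul (1 / k ^ 2))
      simp only [mul_zero, add_zero, zero_add] at h3
      refine h3.congr (fun u => ?_)
      field_simp
    have comp := key.comp (tendsto_inv_nhdsGT_zero (𝕜 := ℝ))
    have hIoi : Tendsto F (nhdsWithin 0 (Ioi 0)) (nhds 0) := by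
      refine comp.congr' ?_
      filter_upwards [self_mem_nhdsWithin] with t (ht : 0 < t)
      rw [hFeq t ht]
      simp only [Function.comp]
      have e1 : -(k * t⁻¹) = -k / t := by ring
      have e2 : t⁻¹ / k = 1 / (k * t) := by
        rw [div_eq_mul_inv, one_div, mul_inv]; exact mul_comm _ _
      rw [e1, e2]
    rw [show Ici (0:ℝ) = insert 0 (Ioi 0) by
        ext y; simp [le_iff_lt_or_eq, eq_comm, or_comm], nhdsWithin_insert, tendsto_sup]
    exact ⟨by simpa [h0] using tendsto_pure_nhds F 0, hIoi⟩
  have := integral_Ioi_of_hasDerivAt_of_nonneg hcont hderiv g'pos htop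
  rw [this, h0, sub_zero]

/-- Theorem 4, case `z = 0`: the density of `Z_n = T_b - T_a` at 0 equals
`2√(c_a c_b)/(π(c_a + c_b)²) = 2(1-β²)/(c_C π (1+β²)²)`. -/
theorem systemC_noise_pdf_zero (ca cb : ℝ) (hca : 0 < ca) (hcb : 0 < cb)
    (cC β : ℝ) (hcC : cC = (Real.sqrt ca + Real.sqrt cb) ^ 2)
    (hβ : β = (Real.sqrt cb - Real.sqrt ca) / (Real.sqrt ca + Real.sqrt cb)) :
    (∫ t in Set.Ioi (0:ℝ), levyPDF ca t * levyPDF cb t)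
        = 2 * Real.sqrt (ca * cb) / (Real.pi * (ca + cb) ^ 2)
    ∧ (2 * Real.sqrt (ca * cb) / (Real.pi * (ca + cb) ^ 2) : ℝ)
        = 2 * (1 - β ^ 2) / (cC * Real.pi * (1 + β ^ 2) ^ 2) := by
  have hπ : (0:ℝ) < Real.pi := Real.pi_pos
  constructor
  · have hcongr : Set.EqOn (fun t => levyPDF ca t * levyPDF cb t)
        (fun t => Real.sqrt (ca * cb) / (2 * Real.pi)
          * (Real.exp (-((ca + cb) / 2) / t) / t ^ 3)) (Set.Ioi 0) := by
      intro t ht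
      have ht : (0:ℝ) < t := ht
      have h2pt : (0:ℝ) < 2 * Real.pi * t ^ 3 := by positivity
      simp only [levyPDF, if_pos ht]
      rw [mul_mul_mul_comm, ← Real.exp_add, ← Real.sqrt_mul (by positivity)]
      rw [show ca / (2 * Real.pi * t ^ 3) * (cb / (2 * Real.pi * t ^ 3))
          = (ca * cb) / (2 * Real.pi * t ^ 3) ^ 2 by ring]
      rw [Real.sqrt_div (by positivity), Real.sqrt_sq h2pt.le]
      rw [show -ca / (2 * t) + -cb / (2 * t) = -((ca + cb) / 2) / t by ring]
      field_simp
    rw [setIntegral_congr_fun measurableSet_Ioi hcongr]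
    rw [MeasureTheory.integral_const_mul]
    rw [aux_int _ (by positivity : (0:ℝ) < (ca + cb) / 2)]
    have hsum : (0:ℝ) < ca + cb := by linarith
    field_simp
  · subst hcC hβ
    rw [Real.sqrt_mul hca.le]
    set a := Real.sqrt ca with ha
    set b := Real.sqrt cb with hb
    have hsa : a ^ 2 = ca := Real.sq_sqrt hca.le
    have hsb : b ^ 2 = cb := Real.sq_sqrt hcb.le
    have ha0 : 0 < a := Real.sqrt_pos.2 hca
    have hb0 : 0 < b := Real.sqrt_pos.2 hcb
    have hab : (0:ℝ) < a + b := by linarith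
    have hβ0 : (0:ℝ) < 1 + ((b - a) / (a + b)) ^ 2 := by positivity
    rw [← hsa, ← hsb]
    field_simp
    ring
end

section
/- The density g_c of the difference of two independent Lévy random variables with scale c > 0, namely g_c(u) = ∫_ℝ f_c(t + u) · f_c(t) dt, is an even function of u and is strictly decreasing on (0, ∞); in particular g_c is unimodal with its unique mode at u = 0. -/
open MeasureTheory Set

/-- Density of the difference of two independent Lévy random variables with scale `c`. -/
noncomputable def gdiff (c u : ℝ) : ℝ := ∫ t : ℝ, levyPDF c (t + u) * levyPDF c t

/-- The integrand after the substitution `p = t (t + u)`. -/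
noncomputable def Kfun (c u p : ℝ) : ℝ :=
  c / (2 * Real.pi * Real.sqrt (p ^ 3)) *
    Real.exp (-(c / (2 * p)) * Real.sqrt (u ^ 2 + 4 * p)) / Real.sqrt (u ^ 2 + 4 * p)

lemma cube_le_exp {x : ℝ} (hx : 0 ≤ x) : x ^ 3 / 27 ≤ Real.exp x := by
  have h : x / 3 ≤ Real.exp (x / 3) := le_trans (by linarith) (Real.add_one_le_exp (x / 3))
  have h2 : (x / 3) ^ 3 ≤ Real.exp (x / 3) ^ 3 := pow_le_pow_left₀ (by positivity) h 3
  have h3 : Real.exp (x / 3) ^ 3 = Real.exp x := by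
    rw [← Real.exp_nat_mul]; congr 1; push_cast; ring
  calc x ^ 3 / 27 = (x / 3) ^ 3 := by ring
    _ ≤ Real.exp (x / 3) ^ 3 := h2
    _ = Real.exp x := h3

lemma exp_neg_le_cube {x : ℝ} (hx : 0 < x) : Real.exp (-x) ≤ 27 / x ^ 3 := by
  have h1 : x ^ 3 / 27 ≤ Real.exp x := cube_le_exp hx.le
  rw [Real.exp_neg, inv_le_comm₀ (Real.exp_pos x) (by positivity)]
  calc (27 / x ^ 3)⁻¹ = x ^ 3 / 27 := by field_simp
    _ ≤ Real.exp x := h1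

lemma sqrt_four_mul {p : ℝ} (hp : 0 ≤ p) : Real.sqrt (4 * p) = 2 * Real.sqrt p := by
  rw [show (4 : ℝ) * p = (2 : ℝ) ^ 2 * p by ring, Real.sqrt_mul (by positivity),
    Real.sqrt_sq (by norm_num)]

lemma Kfun_pos {c u p : ℝ} (hc : 0 < c) (hp : 0 < p) : 0 < Kfun c u p := by
  have h1 : 0 < Real.sqrt (p ^ 3) := Real.sqrt_pos.2 (by positivity)
  have h2 : 0 < Real.sqrt (u ^ 2 + 4 * p) := Real.sqrt_pos.2 (by positivity)
  have := Real.pi_pos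
  unfold Kfun
  positivity

lemma Kfun_lt {c u v p : ℝ} (hc : 0 < c) (hu : 0 ≤ u) (huv : u < v) (hp : 0 < p) :
    Kfun c v p < Kfun c u p := by
  have hA : 0 < Real.sqrt (u ^ 2 + 4 * p) := Real.sqrt_pos.2 (by positivity)
  have hB : 0 < Real.sqrt (v ^ 2 + 4 * p) := Real.sqrt_pos.2 (by positivity)
  have hAB : Real.sqrt (u ^ 2 + 4 * p) < Real.sqrt (v ^ 2 + 4 * p) :=
    Real.sqrt_lt_sqrt (by positivity) (by nlinarith)
  have h1 : 0 < Real.sqrt (p ^ 3) := Real.sqrt_pos.2 (by positivity)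
  have hπ := Real.pi_pos
  have hC : 0 < c / (2 * Real.pi * Real.sqrt (p ^ 3)) := by positivity
  have hE : Real.exp (-(c / (2 * p)) * Real.sqrt (v ^ 2 + 4 * p))
      < Real.exp (-(c / (2 * p)) * Real.sqrt (u ^ 2 + 4 * p)) := by
    apply Real.exp_lt_exp.2
    have hk : 0 < c / (2 * p) := by positivity
    nlinarith
  unfold Kfun
  calc c / (2 * Real.pi * Real.sqrt (p ^ 3)) *
        Real.exp (-(c / (2 * p)) * Real.sqrt (v ^ 2 + 4 * p)) / Real.sqrt (v ^ 2 + 4 * p)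
      < c / (2 * Real.pi * Real.sqrt (p ^ 3)) *
        Real.exp (-(c / (2 * p)) * Real.sqrt (u ^ 2 + 4 * p)) / Real.sqrt (v ^ 2 + 4 * p) := by
        apply div_lt_div_of_pos_right _ hB
        exact (mul_lt_mul_iff_right₀ hC).2 hE
    _ < c / (2 * Real.pi * Real.sqrt (p ^ 3)) *
        Real.exp (-(c / (2 * p)) * Real.sqrt (u ^ 2 + 4 * p)) / Real.sqrt (u ^ 2 + 4 * p) := by
        exact div_lt_div_of_pos_left (by positivity) hA hAB

lemma Kfun_continuousOn (c u : ℝ) : ContinuousOn (Kfun c u) (Ioi 0) := by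
  unfold Kfun
  apply ContinuousOn.div
  · apply ContinuousOn.mul
    · apply ContinuousOn.div continuousOn_const
      · exact (continuous_const.mul (Real.continuous_sqrt.comp (continuous_pow 3))).continuousOn
      · intro p hp
        have hp' : (0 : ℝ) < p := hp
        have h1 : 0 < Real.sqrt (p ^ 3) := Real.sqrt_pos.2 (by positivity)
        have := Real.pi_pos
        positivity
    · apply Real.continuous_exp.comp_continuousOn
      apply ContinuousOn.mul
      · apply ContinuousOn.neg
        apply ContinuousOn.div continuousOn_const (by fun_prop)
        intro p hp
        have hp' : (0 : ℝ) < p := hp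
        positivity
      · exact (Real.continuous_sqrt.comp (by fun_prop)).continuousOn
  · exact (Real.continuous_sqrt.comp (by fun_prop)).continuousOn
  · intro p hp
    have hp' : (0 : ℝ) < p := hp
    exact (Real.sqrt_pos.2 (by positivity)).ne'

lemma Kfun_integrableOn {c : ℝ} (hc : 0 < c) (u : ℝ) :
    IntegrableOn (Kfun c u) (Ioi 0) := by
  have hπ := Real.pi_pos
  have hsplit : Ioi (0 : ℝ) = Ioc (0 : ℝ) 1 ∪ Ioi 1 := (Ioc_union_Ioi_eq_Ioi zero_le_one).symm
  rw [hsplit]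
  apply IntegrableOn.union
  · -- on (0, 1]
    have hint : IntegrableOn
        (fun p : ℝ => 27 / (4 * Real.pi * c ^ 2) * p ^ (-(1 / 2) : ℝ)) (Ioc (0 : ℝ) 1) := by
      have h1 : IntegrableOn (fun p : ℝ => p ^ (-(1 / 2) : ℝ)) (Ioc (0 : ℝ) 1) := by
        have := (intervalIntegral.intervalIntegrable_rpow'
          (show (-1 : ℝ) < -(1 / 2) by norm_num) (a := 0) (b := 1)).1
        simpa using this
      exact h1.const_mul (27 / (4 * Real.pi * c ^ 2))
    apply Integrable.mono' hint (((Kfun_continuousOn c u).mono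
      Ioc_subset_Ioi_self).aestronglyMeasurable measurableSet_Ioc)
    rw [ae_restrict_iff' measurableSet_Ioc]
    apply Filter.Eventually.of_forall
    intro p hp
    obtain ⟨hp0, hp1⟩ := hp
    set s : ℝ := Real.sqrt p with hs
    have hs0 : 0 < s := Real.sqrt_pos.2 hp0
    have hs2 : s ^ 2 = p := Real.sq_sqrt hp0.le
    have hsqp : Real.sqrt (p ^ 3) = s ^ 3 := by
      rw [show p ^ 3 = (s ^ 3) ^ 2 by rw [← hs2]; ring, Real.sqrt_sq (by positivity)]
    have hS0 : 0 < Real.sqrt (u ^ 2 + 4 * p) := Real.sqrt_pos.2 (by positivity)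
    have hS2 : 2 * s ≤ Real.sqrt (u ^ 2 + 4 * p) := by
      rw [← sqrt_four_mul hp0.le]
      exact Real.sqrt_le_sqrt (by nlinarith)
    have hE : Real.exp (-(c / (2 * p)) * Real.sqrt (u ^ 2 + 4 * p)) ≤ 27 * s ^ 3 / c ^ 3 := by
      have harg : -(c / (2 * p)) * Real.sqrt (u ^ 2 + 4 * p) ≤ -(c / s) := by
        have hk : 0 < c / (2 * p) := by positivity
        have hcs : c / (2 * p) * (2 * s) = c / s := by
          rw [← hs2]; field_simp
        nlinarith
      calc Real.exp (-(c / (2 * p)) * Real.sqrt (u ^ 2 + 4 * p))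
          ≤ Real.exp (-(c / s)) := Real.exp_le_exp.2 harg
        _ ≤ 27 / (c / s) ^ 3 := exp_neg_le_cube (by positivity)
        _ = 27 * s ^ 3 / c ^ 3 := by
            rw [div_pow, div_div_eq_mul_div]
    rw [Real.norm_eq_abs, abs_of_pos (Kfun_pos hc hp0)]
    unfold Kfun
    rw [hsqp]
    calc c / (2 * Real.pi * s ^ 3) *
          Real.exp (-(c / (2 * p)) * Real.sqrt (u ^ 2 + 4 * p)) / Real.sqrt (u ^ 2 + 4 * p)
        ≤ c / (2 * Real.pi * s ^ 3) * (27 * s ^ 3 / c ^ 3) / (2 * s) := by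
          apply div_le_div₀ (by positivity)
          · exact mul_le_mul_of_nonneg_left hE (by positivity)
          · positivity
          · exact hS2
      _ = 27 / (4 * Real.pi * c ^ 2) * p ^ (-(1 / 2) : ℝ) := by
          rw [Real.rpow_neg hp0.le, ← Real.sqrt_eq_rpow, ← hs]
          field_simp
          ring
  · -- on (1, ∞)
    have hint : IntegrableOn (fun p : ℝ => c / (4 * Real.pi) * p ^ (-2 : ℝ)) (Ioi (1 : ℝ)) := by
      have h1 : IntegrableOn (fun p : ℝ => p ^ (-2 : ℝ)) (Ioi (1 : ℝ)) :=
        integrableOn_Ioi_rpow_of_lt (by norm_num) one_pos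
      exact h1.const_mul (c / (4 * Real.pi))
    apply Integrable.mono' hint (((Kfun_continuousOn c u).mono
      (Ioi_subset_Ioi zero_le_one)).aestronglyMeasurable measurableSet_Ioi)
    rw [ae_restrict_iff' measurableSet_Ioi]
    apply Filter.Eventually.of_forall
    intro p hp
    have hp0 : (0 : ℝ) < p := lt_trans one_pos hp
    have hs0 : 0 < Real.sqrt p := Real.sqrt_pos.2 hp0
    have hq0 : 0 < Real.sqrt (p ^ 3) := Real.sqrt_pos.2 (by positivity)
    have hS0 : 0 < Real.sqrt (u ^ 2 + 4 * p) := Real.sqrt_pos.2 (by positivity)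
    have hS2 : 2 * Real.sqrt p ≤ Real.sqrt (u ^ 2 + 4 * p) := by
      rw [← sqrt_four_mul hp0.le]
      exact Real.sqrt_le_sqrt (by nlinarith)
    have hmul : Real.sqrt (p ^ 3) * Real.sqrt p = p ^ 2 := by
      rw [← Real.sqrt_mul (by positivity), show p ^ 3 * p = (p ^ 2) ^ 2 by ring,
        Real.sqrt_sq (by positivity)]
    have hE : Real.exp (-(c / (2 * p)) * Real.sqrt (u ^ 2 + 4 * p)) ≤ 1 := by
      rw [Real.exp_le_one_iff]
      have h1 : 0 ≤ c / (2 * p) * Real.sqrt (u ^ 2 + 4 * p) :=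
        mul_nonneg (by positivity) hS0.le
      linarith
    rw [Real.norm_eq_abs, abs_of_pos (Kfun_pos hc hp0)]
    unfold Kfun
    calc c / (2 * Real.pi * Real.sqrt (p ^ 3)) *
          Real.exp (-(c / (2 * p)) * Real.sqrt (u ^ 2 + 4 * p)) / Real.sqrt (u ^ 2 + 4 * p)
        ≤ c / (2 * Real.pi * Real.sqrt (p ^ 3)) * 1 / (2 * Real.sqrt p) := by
          apply div_le_div₀ (by positivity)
          · exact mul_le_mul_of_nonneg_left hE (by positivity)
          · positivity
          · exact hS2
      _ = c / (4 * Real.pi) * p ^ (-2 : ℝ) := by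
          rw [show (-2 : ℝ) = ((-2 : ℤ) : ℝ) by norm_num, Real.rpow_intCast, zpow_neg]
          rw [show p ^ (2 : ℤ) = p ^ 2 by rw [zpow_two, pow_two], ← hmul]
          field_simp
          norm_num

lemma levyPDF_of_nonpos {c x : ℝ} (hx : x ≤ 0) : levyPDF c x = 0 := by
  rw [levyPDF, if_neg (not_lt.2 hx)]

lemma gdiff_eq {c : ℝ} (hc : 0 < c) {u : ℝ} (hu : 0 ≤ u) :
    gdiff c u = ∫ p in Ioi (0 : ℝ), Kfun c u p := by
  have hπ := Real.pi_pos
  have step1 : gdiff c u = ∫ t in Ioi (0 : ℝ), levyPDF c (t + u) * levyPDF c t := by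
    apply (setIntegral_eq_integral_of_forall_compl_eq_zero _).symm
    intro t ht
    simp only [mem_Ioi, not_lt] at ht
    rw [levyPDF_of_nonpos ht, mul_zero]
  have hmono : StrictMonoOn (fun t : ℝ => t ^ 2 + u * t) (Ioi 0) := by
    intro x hx y hy hxy
    simp only [mem_Ioi] at *
    nlinarith
  have hderiv : ∀ t ∈ Ioi (0 : ℝ),
      HasDerivWithinAt (fun t : ℝ => t ^ 2 + u * t) (2 * t + u) (Ioi 0) t := by
    intro t ht
    have h1 : HasDerivAt (fun t : ℝ => t ^ 2 + u * t) (2 * t + u) t := by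
      have := ((hasDerivAt_pow 2 t).add ((hasDerivAt_id t).const_mul u))
      simpa [Pi.add_def] using this
    exact h1.hasDerivWithinAt
  have himg : (fun t : ℝ => t ^ 2 + u * t) '' Ioi 0 = Ioi 0 := by
    ext p
    constructor
    · rintro ⟨t, ht, rfl⟩
      have ht' : (0 : ℝ) < t := ht
      simp only [mem_Ioi]
      nlinarith
    · intro hp
      have hp' : (0 : ℝ) < p := hp
      have hS : Real.sqrt (u ^ 2 + 4 * p) ^ 2 = u ^ 2 + 4 * p :=
        Real.sq_sqrt (by positivity)
      have hSu : u < Real.sqrt (u ^ 2 + 4 * p) := by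
        nlinarith [Real.sqrt_nonneg (u ^ 2 + 4 * p)]
      refine ⟨(-u + Real.sqrt (u ^ 2 + 4 * p)) / 2, ?_, ?_⟩
      · simp only [mem_Ioi]; linarith
      · simp only
        linear_combination hS / 4
  have hcov := integral_image_eq_integral_abs_deriv_smul measurableSet_Ioi hderiv
    hmono.injOn (Kfun c u)
  rw [himg] at hcov
  rw [step1, hcov]
  apply setIntegral_congr_fun measurableSet_Ioi
  intro t ht
  have ht' : (0 : ℝ) < t := ht
  have htu : (0 : ℝ) < t + u := by linarith
  have hp : (0 : ℝ) < t ^ 2 + u * t := by nlinarith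
  have hS : Real.sqrt (u ^ 2 + 4 * (t ^ 2 + u * t)) = 2 * t + u := by
    rw [show u ^ 2 + 4 * (t ^ 2 + u * t) = (2 * t + u) ^ 2 by ring,
      Real.sqrt_sq (by linarith)]
  have hq0 : 0 < Real.sqrt ((t ^ 2 + u * t) ^ 3) := Real.sqrt_pos.2 (by positivity)
  have h2tu : (0 : ℝ) < 2 * t + u := by linarith
  have hden : (2 * Real.pi * (t + u) ^ 3) * (2 * Real.pi * t ^ 3) =
      (2 * Real.pi * Real.sqrt ((t ^ 2 + u * t) ^ 3)) ^ 2 := by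
    have h2 : Real.sqrt ((t ^ 2 + u * t) ^ 3) ^ 2 = (t ^ 2 + u * t) ^ 3 :=
      Real.sq_sqrt (by positivity)
    linear_combination (-4 * Real.pi ^ 2) * h2
  have hsqprod : Real.sqrt (c / (2 * Real.pi * (t + u) ^ 3)) *
      Real.sqrt (c / (2 * Real.pi * t ^ 3)) =
      c / (2 * Real.pi * Real.sqrt ((t ^ 2 + u * t) ^ 3)) := by
    rw [← Real.sqrt_mul (by positivity), div_mul_div_comm, hden,
      show c * c = c ^ 2 by ring, ← div_pow, Real.sqrt_sq (by positivity)]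
  have hexp : Real.exp (-c / (2 * (t + u))) * Real.exp (-c / (2 * t)) =
      Real.exp (-(c / (2 * (t ^ 2 + u * t))) * (2 * t + u)) := by
    rw [← Real.exp_add]
    congr 1
    field_simp
    ring
  simp only [smul_eq_mul]
  rw [levyPDF, if_pos htu, levyPDF, if_pos ht']
  unfold Kfun
  rw [hS, abs_of_pos h2tu]
  have hcancel : (2 * t + u) * (c / (2 * Real.pi * Real.sqrt ((t ^ 2 + u * t) ^ 3)) *
      Real.exp (-(c / (2 * (t ^ 2 + u * t))) * (2 * t + u)) / (2 * t + u)) =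
      c / (2 * Real.pi * Real.sqrt ((t ^ 2 + u * t) ^ 3)) *
      Real.exp (-(c / (2 * (t ^ 2 + u * t))) * (2 * t + u)) := by
    field_simp
  rw [hcancel]
  calc Real.sqrt (c / (2 * Real.pi * (t + u) ^ 3)) * Real.exp (-c / (2 * (t + u))) *
        (Real.sqrt (c / (2 * Real.pi * t ^ 3)) * Real.exp (-c / (2 * t)))
      = (Real.sqrt (c / (2 * Real.pi * (t + u) ^ 3)) * Real.sqrt (c / (2 * Real.pi * t ^ 3))) *
        (Real.exp (-c / (2 * (t + u))) * Real.exp (-c / (2 * t))) := by ring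
    _ = c / (2 * Real.pi * Real.sqrt ((t ^ 2 + u * t) ^ 3)) *
        Real.exp (-(c / (2 * (t ^ 2 + u * t))) * (2 * t + u)) := by rw [hsqprod, hexp]

lemma gdiff_neg (c u : ℝ) : gdiff c (-u) = gdiff c u := by
  unfold gdiff
  rw [← MeasureTheory.integral_add_right_eq_self
    (fun t => levyPDF c (t + -u) * levyPDF c t) u]
  simp only [add_neg_cancel_right]
  simp_rw [mul_comm]

lemma gdiff_lt {c : ℝ} (hc : 0 < c) {u v : ℝ} (hu : 0 ≤ u) (huv : u < v) :
    gdiff c v < gdiff c u := by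
  rw [gdiff_eq hc hu, gdiff_eq hc (hu.trans huv.le)]
  have hiu := Kfun_integrableOn hc u
  have hiv := Kfun_integrableOn hc v
  have h1 : 0 ≤ᵐ[volume.restrict (Ioi (0:ℝ))] fun p => Kfun c u p - Kfun c v p :=
    (ae_restrict_iff' measurableSet_Ioi).2 (Filter.Eventually.of_forall fun p hp =>
      (sub_pos.2 (Kfun_lt hc hu huv hp)).le)
  have h2 : IntegrableOn (fun p => Kfun c u p - Kfun c v p) (Ioi (0:ℝ)) := hiu.sub hiv
  have hsub : 0 < ∫ p in Ioi (0 : ℝ), (Kfun c u p - Kfun c v p) := by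
    rw [setIntegral_pos_iff_support_of_nonneg_ae h1 h2]
    have hsubset : Ioi (0:ℝ) ⊆
        (Function.support fun p => Kfun c u p - Kfun c v p) ∩ Ioi 0 := by
      intro p hp
      have hp' : (0:ℝ) < p := hp
      exact ⟨ne_of_gt (sub_pos.2 (Kfun_lt hc hu huv hp')), hp⟩
    calc (0:ENNReal) < volume (Ioi (0:ℝ)) := by simp [Real.volume_Ioi]
      _ ≤ _ := measure_mono hsubset
  have heq : ∫ p in Ioi (0 : ℝ), (Kfun c u p - Kfun c v p) =
      (∫ p in Ioi (0 : ℝ), Kfun c u p) - ∫ p in Ioi (0 : ℝ), Kfun c v p :=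
    integral_sub hiu hiv
  linarith [heq ▸ hsub]

/-- The density of the difference of two independent Lévy random variables with scale
`c` is even, strictly decreasing on `(0,∞)`, and unimodal with unique mode at 0. -/
theorem gdiff_even_strictAnti (c : ℝ) (hc : 0 < c) :
    (∀ u : ℝ, gdiff c (-u) = gdiff c u)
    ∧ StrictAntiOn (gdiff c) (Set.Ioi (0:ℝ))
    ∧ (∀ u : ℝ, u ≠ 0 → gdiff c u < gdiff c 0) := by
  refine ⟨fun u => gdiff_neg c u, ?_, ?_⟩
  · intro u hu v hv huv
    exact gdiff_lt hc (le_of_lt hu) huv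
  · intro u hu
    rcases lt_or_gt_of_ne hu with h | h
    · rw [← gdiff_neg c u]
      exact gdiff_lt hc le_rfl (by linarith)
    · exact gdiff_lt hc le_rfl h
end

section
/- (Theorem 6 specialized to the system A Lévy noise, α = 1/2, β = 1) For every c > 0, the logarithmic moment of the Lévy distribution with location 0 and scale c satisfies ∫₀^∞ (log t) · √(c/(2π t³)) · exp(−c/(2t)) dt = log(2c) + γ, where γ is the Euler–Mascheroni constant. Consequently the geometric power S₀ = exp(E[log|T_n|]) of the Lévy noise T_n equals 2c·e^γ, in agreement with the general formula S₀(N) = c · G_γ^{1/α − 1} · (1 + β² tan²(πα/2))^{1/(2α)} with α = 1/2, β = 1, G_γ = e^γ. -/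
open MeasureTheory Set Real Filter

local notation "γ" => Real.eulerMascheroniConstant

-- complex integrand equals ofReal of real integrand for t > 0
lemma cpow_half_eq (t : ℝ) (ht : 0 < t) :
    ((t : ℂ) ^ ((1/2 : ℂ) - 1) * (Real.log t * Real.exp (-t)))
      = ((t ^ (-(1/2) : ℝ) * (Real.log t * Real.exp (-t)) : ℝ) : ℂ) := by
  rw [show ((1/2 : ℂ) - 1) = ((-(1/2) : ℝ) : ℂ) by norm_num]
  rw [← Complex.ofReal_cpow ht.le]
  push_cast
  ring

lemma g2_integral :
    (∫ u in Ioi (0:ℝ), u ^ (-(1/2) : ℝ) * (Real.log u * Real.exp (-u)))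
      = -Real.sqrt Real.pi * (γ + 2 * Real.log 2) := by
  have hD := Complex.hasDerivAt_GammaIntegral (s := (1/2 : ℂ)) (by norm_num)
  have hev : Complex.GammaIntegral =ᶠ[nhds (1/2 : ℂ)] Complex.Gamma := by
    have : IsOpen {s : ℂ | 0 < s.re} := isOpen_lt continuous_const Complex.continuous_re
    filter_upwards [this.mem_nhds (by norm_num : (0:ℝ) < (1/2 : ℂ).re)] with s hs
    exact (Complex.Gamma_eq_integral hs).symm
  have hD' : HasDerivAt Complex.Gamma
      (∫ t : ℝ in Ioi 0, (t:ℂ) ^ ((1/2:ℂ) - 1) * (Real.log t * Real.exp (-t))) (1/2 : ℂ) :=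
    hD.congr_of_eventuallyEq hev.symm
  have huniq := hD'.unique Complex.hasDerivAt_Gamma_one_half
  have hre : (∫ t : ℝ in Ioi 0, (t:ℂ) ^ ((1/2:ℂ) - 1) * (Real.log t * Real.exp (-t)))
      = ((∫ u in Ioi (0:ℝ), u ^ (-(1/2) : ℝ) * (Real.log u * Real.exp (-u)) : ℝ) : ℂ) := by
    rw [show ((∫ u in Ioi (0:ℝ), u ^ (-(1/2) : ℝ) * (Real.log u * Real.exp (-u)) : ℝ) : ℂ) = ∫ u in Ioi (0:ℝ), ((u ^ (-(1/2) : ℝ) * (Real.log u * Real.exp (-u)) : ℝ) : ℂ) from (integral_ofReal).symm]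
    refine setIntegral_congr_fun measurableSet_Ioi fun t ht => cpow_half_eq t ht
  rw [hre] at huniq
  have : ((∫ u in Ioi (0:ℝ), u ^ (-(1/2) : ℝ) * (Real.log u * Real.exp (-u)) : ℝ) : ℂ)
      = ((-Real.sqrt Real.pi * (γ + 2 * Real.log 2) : ℝ) : ℂ) := by
    rw [huniq]; push_cast [Complex.ofReal_log (by norm_num : (0:ℝ) ≤ 2)]; norm_num
  exact_mod_cast this

lemma g2_integrable :
    IntegrableOn (fun u : ℝ => u ^ (-(1/2) : ℝ) * (Real.log u * Real.exp (-u))) (Ioi 0) := by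
  have h := mellin_hasDerivAt_of_isBigO_rpow (E := ℂ) (a := 1) (b := 0)
      (f := fun x : ℝ => (Real.exp (-x) : ℂ)) (s := (1/2 : ℂ))
      ?_ ?_ (by norm_num) ?_ (by norm_num)
  · have h1 : IntegrableOn
        (fun t : ℝ => (t:ℂ) ^ ((1/2:ℂ) - 1) • (Real.log t • (Real.exp (-t) : ℂ))) (Ioi 0) := h.1
    have h2 : IntegrableOn
        (fun t : ℝ => ((fun u : ℝ => u ^ (-(1/2) : ℝ) * (Real.log u * Real.exp (-u))) t : ℂ))
        (Ioi 0) := by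
      refine h1.congr_fun (fun t ht => ?_) measurableSet_Ioi
      rw [← cpow_half_eq t ht]
      dsimp only
      rw [smul_eq_mul, Complex.real_smul]
    simpa [IntegrableOn, ← Complex.ofReal_neg, ← Complex.ofReal_exp] using h2.re
  · refine (Continuous.continuousOn ?_).locallyIntegrableOn measurableSet_Ioi
    exact Complex.continuous_ofReal.comp (Real.continuous_exp.comp continuous_neg)
  · rw [← Asymptotics.isBigO_norm_left]
    simp_rw [Complex.norm_real,
      Asymptotics.isBigO_norm_left]
    simpa only [neg_one_mul] using (isLittleO_exp_neg_mul_rpow_atTop zero_lt_one _).isBigO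
  · simp_rw [neg_zero, Real.rpow_zero]
    refine Asymptotics.isBigO_const_of_tendsto (?_ : Tendsto _ _ (nhds (1 : ℂ))) one_ne_zero
    rw [(by simp : (1 : ℂ) = Real.exp (-0))]
    exact (Complex.continuous_ofReal.comp (Real.continuous_exp.comp continuous_neg)).continuousWithinAt

lemma rpow_helper {x : ℝ} (hx : 0 < x) :
    (|(-1 : ℝ)| * x ^ ((-1 : ℝ) - 1)) = (x ^ 2)⁻¹ := by
  rw [show ((-1:ℝ) - 1) = ((-2 : ℤ) : ℝ) by norm_num, Real.rpow_intCast, zpow_neg]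
  norm_num

lemma rpow_neg_one' {x : ℝ} (hx : 0 < x) : x ^ ((-1:ℝ)) = x⁻¹ := by
  rw [show ((-1:ℝ)) = ((-1 : ℤ) : ℝ) by norm_num, Real.rpow_intCast, zpow_neg_one]

lemma subst_integral (g : ℝ → ℝ) {b : ℝ} (hb : 0 < b) :
    (∫ x in Ioi (0:ℝ), g (b / x) * (b / x ^ 2)) = ∫ u in Ioi (0:ℝ), g u := by
  have h1 := integral_comp_rpow_Ioi (fun y => g (b * y)) (p := (-1:ℝ)) (by norm_num)
  have h2 := integral_comp_mul_left_Ioi g 0 hb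
  have key : (∫ x in Ioi (0:ℝ), g (b / x) * (b / x ^ 2))
      = b * ∫ x in Ioi (0:ℝ), (|(-1 : ℝ)| * x ^ ((-1:ℝ) - 1)) • g (b * x ^ (-1:ℝ)) := by
    rw [← integral_const_mul]
    refine setIntegral_congr_fun measurableSet_Ioi fun x hx => ?_
    have hx' : (0:ℝ) < x := hx
    rw [rpow_helper hx', rpow_neg_one' hx', smul_eq_mul]
    field_simp
  rw [key, h1, h2]
  simp only [mul_zero, smul_eq_mul]
  rw [← mul_assoc, mul_inv_cancel₀ hb.ne', one_mul]

lemma subst_integrable (g : ℝ → ℝ) (hg : IntegrableOn g (Ioi 0)) {b : ℝ} (hb : 0 < b) :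
    IntegrableOn (fun x => g (b / x) * (b / x ^ 2)) (Ioi 0) := by
  have h2 : IntegrableOn (fun y => g (b * y)) (Ioi 0) := by
    refine (integrableOn_Ioi_comp_mul_left_iff g 0 hb).mpr ?_
    simpa using hg
  have h1 := (integrableOn_Ioi_comp_rpow_iff (fun y => g (b * y)) (p := (-1:ℝ))
      (by norm_num)).mpr h2
  refine IntegrableOn.congr_fun (h1.const_mul b) (fun x hx => ?_) measurableSet_Ioi
  have hx' : (0:ℝ) < x := hx
  rw [rpow_helper hx', rpow_neg_one' hx', smul_eq_mul]
  field_simp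

lemma keyA {c t : ℝ} (hc : 0 < c) (ht : 0 < t) :
    (Real.sqrt π)⁻¹ * (Real.exp (-(c/2/t)) * (c/2/t) ^ (-(1/2):ℝ)) * (c/2/t^2)
      = Real.sqrt (c / (2 * π * t ^ 3)) * Real.exp (-c / (2 * t)) := by
  have hb : (0:ℝ) < c/2 := by linarith
  have hbt : (0:ℝ) < c/2/t := div_pos hb ht
  have hπ := Real.pi_pos
  have hexp : Real.exp (-(c/2/t)) = Real.exp (-c / (2*t)) := by ring_nf
  rw [hexp]
  have h1 : ((c/2/t) ^ (-(1/2):ℝ)) ^ 2 = (c/2/t)⁻¹ := by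
    rw [← Real.rpow_natCast ((c/2/t) ^ (-(1/2):ℝ)) 2, ← Real.rpow_mul hbt.le,
      show ((-(1/2):ℝ) * ((2:ℕ):ℝ)) = -1 by norm_num, rpow_neg_one' hbt]
  have hsq : ((Real.sqrt π)⁻¹ * (c/2/t) ^ (-(1/2):ℝ) * (c/2/t^2)) ^ 2
      = c / (2 * π * t ^ 3) := by
    rw [mul_pow, mul_pow, h1, inv_pow, Real.sq_sqrt hπ.le]
    field_simp
  have hnn : 0 ≤ (Real.sqrt π)⁻¹ * (c/2/t) ^ (-(1/2):ℝ) * (c/2/t^2) := by positivity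
  rw [← hsq, Real.sqrt_sq hnn]
  ring


/-- Theorem 6 specialized to the system A Lévy noise (`α = 1/2`, `β = 1`): the
logarithmic moment of the Lévy distribution with scale `c` is `log(2c) + γ`, so the
geometric power equals `2c·e^γ`. -/
theorem levy_log_moment (c : ℝ) (hc : 0 < c) :
    (∫ t in Set.Ioi (0:ℝ),
        Real.log t * (Real.sqrt (c / (2 * Real.pi * t ^ 3)) * Real.exp (-c / (2 * t))))
      = Real.log (2 * c) + Real.eulerMascheroniConstant
    ∧ Real.exp (∫ t in Set.Ioi (0:ℝ), Real.log t * levyPDF c t)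
      = 2 * c * Real.exp Real.eulerMascheroniConstant := by
  have hπ := Real.pi_pos
  have hsπ : (0:ℝ) < Real.sqrt π := Real.sqrt_pos.mpr hπ
  have hb : (0:ℝ) < c / 2 := by linarith
  set p : ℝ → ℝ := fun t => Real.sqrt (c / (2 * π * t ^ 3)) * Real.exp (-c / (2 * t)) with hp
  set g1 : ℝ → ℝ := fun u => (Real.sqrt π)⁻¹ * (Real.exp (-u) * u ^ (-(1/2):ℝ)) with hg1
  set g2f : ℝ → ℝ := fun u =>
      (Real.sqrt π)⁻¹ * (u ^ (-(1/2):ℝ) * (Real.log u * Real.exp (-u))) with hg2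
  -- integrability and values of g1, g2f
  have hg1_base : IntegrableOn (fun u : ℝ => Real.exp (-u) * u ^ (-(1/2):ℝ)) (Ioi 0) := by
    have h0 := Real.GammaIntegral_convergent (by norm_num : (0:ℝ) < 1/2)
    refine IntegrableOn.congr_fun h0 (fun u hu => ?_) measurableSet_Ioi
    norm_num
  have hg1_int : IntegrableOn g1 (Ioi 0) := hg1_base.const_mul _
  have hg1_val : (∫ u in Ioi (0:ℝ), g1 u) = 1 := by
    rw [hg1]
    rw [MeasureTheory.integral_const_mul]
    have : (∫ u in Ioi (0:ℝ), Real.exp (-u) * u ^ (-(1/2):ℝ)) = Real.Gamma (1/2) := by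
      rw [Real.Gamma_eq_integral (by norm_num : (0:ℝ) < 1/2)]
      norm_num
    rw [this, Real.Gamma_one_half_eq, inv_mul_cancel₀ hsπ.ne']
  have hg2_int : IntegrableOn g2f (Ioi 0) := g2_integrable.const_mul _
  have hg2_val : (∫ u in Ioi (0:ℝ), g2f u)
      = -(Real.eulerMascheroniConstant + 2 * Real.log 2) := by
    rw [hg2, MeasureTheory.integral_const_mul, g2_integral]
    field_simp
  -- key pointwise identities
  have hkeyA : ∀ t ∈ Ioi (0:ℝ), g1 (c/2/t) * (c/2/t^2) = p t := fun t ht => keyA hc ht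
  have hkeyB : ∀ t ∈ Ioi (0:ℝ), g2f (c/2/t) * (c/2/t^2) = Real.log (c/2/t) * p t := by
    intro t ht
    have h := keyA hc (ht : (0:ℝ) < t)
    calc g2f (c/2/t) * (c/2/t^2)
        = Real.log (c/2/t) *
          ((Real.sqrt π)⁻¹ * (Real.exp (-(c/2/t)) * (c/2/t) ^ (-(1/2):ℝ)) * (c/2/t^2)) := by
          rw [hg2]; ring
      _ = Real.log (c/2/t) * p t := by rw [h]
  -- transported integrals
  have hp_int : IntegrableOn p (Ioi 0) :=
    IntegrableOn.congr_fun (subst_integrable g1 hg1_int hb) hkeyA measurableSet_Ioi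
  have hp_val : (∫ t in Ioi (0:ℝ), p t) = 1 := by
    rw [← setIntegral_congr_fun measurableSet_Ioi hkeyA, subst_integral g1 hb, hg1_val]
  have hq_int : IntegrableOn (fun t => Real.log (c/2/t) * p t) (Ioi 0) :=
    IntegrableOn.congr_fun (subst_integrable g2f hg2_int hb) hkeyB measurableSet_Ioi
  have hq_val : (∫ t in Ioi (0:ℝ), Real.log (c/2/t) * p t)
      = -(Real.eulerMascheroniConstant + 2 * Real.log 2) := by
    rw [← setIntegral_congr_fun measurableSet_Ioi hkeyB, subst_integral g2f hb, hg2_val]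
  -- main computation
  have hmain : (∫ t in Ioi (0:ℝ), Real.log t * p t)
      = Real.log (2 * c) + Real.eulerMascheroniConstant := by
    have hsplit : ∀ t ∈ Ioi (0:ℝ),
        Real.log t * p t = Real.log (c/2) * p t - Real.log (c/2/t) * p t := by
      intro t ht
      rw [Real.log_div hb.ne' (ne_of_gt ht)]
      ring
    rw [setIntegral_congr_fun measurableSet_Ioi hsplit,
      integral_sub (hp_int.const_mul _) hq_int, MeasureTheory.integral_const_mul, hp_val, hq_val,
      Real.log_div hc.ne' two_ne_zero, Real.log_mul two_ne_zero hc.ne']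
    ring
  refine ⟨hmain, ?_⟩
  have : (∫ t in Ioi (0:ℝ), Real.log t * levyPDF c t) = ∫ t in Ioi (0:ℝ), Real.log t * p t := by
    refine setIntegral_congr_fun measurableSet_Ioi fun t ht => ?_
    rw [levyPDF, if_pos (mem_Ioi.mp ht)]
  rw [this, hmain, Real.exp_add, Real.exp_log (by linarith)]
end

section
/- (Existence of the ML threshold for system A) Let c > 0 and Δ > 0. Then there exists a threshold th_A with Δ < th_A ≤ c/3 + Δ such that for every t with 0 < t < th_A one has f_c(t) > f_c(t − Δ), and for every t ≥ th_A one has f_c(t) ≤ f_c(t − Δ), where f_c is the Lévy density with scale c (extended by 0 to nonpositive arguments). Consequently, the maximum-likelihood detector for equiprobable binary inputs T_x ∈ {0, Δ} observed through the additive Lévy noise channel T_y = T_x + T_n, T_n Lévy with scale c, is a single-threshold rule: decide T_x = 0 when T_y < th_A and T_x = Δ when T_y ≥ th_A. -/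
open MeasureTheory Set

lemma levyPDF_pos {c x : ℝ} (hc : 0 < c) (hx : 0 < x) : 0 < levyPDF c x := by
  rw [levyPDF, if_pos hx]
  have h1 : 0 < c / (2 * Real.pi * x ^ 3) := by positivity
  exact mul_pos (Real.sqrt_pos.mpr h1) (Real.exp_pos _)

lemma levyPDF_key_iff {c s t : ℝ} (hc : 0 < c) (hs : 0 < s) (ht : 0 < t) :
    levyPDF c t ≤ levyPDF c s ↔ c / s - c / t ≤ 3 * (Real.log t - Real.log s) := by
  have h2π : (0:ℝ) < 2 * Real.pi := by positivity
  have hA : 0 < c / (2 * Real.pi * t ^ 3) := by positivity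
  have hB : 0 < c / (2 * Real.pi * s ^ 3) := by positivity
  rw [levyPDF, levyPDF, if_pos ht, if_pos hs]
  rw [← Real.log_le_log_iff (by positivity) (by positivity)]
  rw [Real.log_mul (by positivity) (Real.exp_ne_zero _),
      Real.log_mul (by positivity) (Real.exp_ne_zero _),
      Real.log_exp, Real.log_exp, Real.log_sqrt hA.le, Real.log_sqrt hB.le,
      Real.log_div hc.ne' (by positivity), Real.log_div hc.ne' (by positivity),
      Real.log_mul h2π.ne' (by positivity), Real.log_mul h2π.ne' (by positivity),
      Real.log_pow, Real.log_pow]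
  push_cast
  have e1 : -c / (2 * t) = -((c / t) / 2) := by ring
  have e2 : -c / (2 * s) = -((c / s) / 2) := by ring
  rw [e1, e2]
  constructor <;> intro h <;> linarith

lemma levyPDF_ratio_eq {c Δ t : ℝ} (hΔ : 0 < Δ) (h1 : Δ < t) :
    c / (t - Δ) - c / t
      = (c / Δ) * (Real.exp (Real.log t - Real.log (t - Δ))
          + Real.exp (-(Real.log t - Real.log (t - Δ))) - 2) := by
  have hs : 0 < t - Δ := by linarith
  have ht : 0 < t := by linarith
  rw [Real.exp_sub, neg_sub, Real.exp_sub, Real.exp_log ht, Real.exp_log hs]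
  field_simp
  ring

lemma levyPDF_mono_step {c Δ t₁ t₂ : ℝ} (hc : 0 < c) (hΔ : 0 < Δ) (h1 : Δ < t₁) (h12 : t₁ ≤ t₂)
    (H : c / (t₁ - Δ) - c / t₁ ≤ 3 * (Real.log t₁ - Real.log (t₁ - Δ))) :
    c / (t₂ - Δ) - c / t₂ ≤ 3 * (Real.log t₂ - Real.log (t₂ - Δ)) := by
  have h2 : Δ < t₂ := lt_of_lt_of_le h1 h12
  have hs1 : 0 < t₁ - Δ := by linarith
  have hs2 : 0 < t₂ - Δ := by linarith
  set u₁ := Real.log t₁ - Real.log (t₁ - Δ) with hu₁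
  set u₂ := Real.log t₂ - Real.log (t₂ - Δ) with hu₂
  have hu1pos : 0 < u₁ := by
    have := Real.log_lt_log hs1 (by linarith : t₁ - Δ < t₁); linarith
  have hu2pos : 0 < u₂ := by
    have := Real.log_lt_log hs2 (by linarith : t₂ - Δ < t₂); linarith
  have ht1 : 0 < t₁ := by linarith
  have ht2 : 0 < t₂ := by linarith
  have hle : u₂ ≤ u₁ := by
    rw [hu₁, hu₂, ← Real.log_div ht1.ne' hs1.ne', ← Real.log_div ht2.ne' hs2.ne']
    apply Real.log_le_log (div_pos ht2 hs2)
    rw [div_le_div_iff₀ hs2 hs1]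
    nlinarith
  set lam := u₂ / u₁ with hlam
  have hlam0 : 0 ≤ lam := by positivity
  have hlam1 : lam ≤ 1 := by rw [hlam, div_le_one hu1pos]; exact hle
  have hlu : lam * u₁ = u₂ := div_mul_cancel₀ _ hu1pos.ne'
  have cvx : ∀ a : ℝ, Real.exp (lam * a) ≤ (1 - lam) + lam * Real.exp a := by
    intro a
    have := convexOn_exp.2 (Set.mem_univ (0:ℝ)) (Set.mem_univ a)
      (by linarith : (0:ℝ) ≤ 1 - lam) hlam0 (by ring)
    simpa [smul_eq_mul] using this
  have c1 : Real.exp u₂ ≤ (1 - lam) + lam * Real.exp u₁ := by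
    rw [← hlu]; exact cvx u₁
  have c2 : Real.exp (-u₂) ≤ (1 - lam) + lam * Real.exp (-u₁) := by
    have := cvx (-u₁)
    rw [show lam * -u₁ = -(lam * u₁) by ring, hlu] at this
    exact this
  rw [levyPDF_ratio_eq hΔ h2]
  rw [levyPDF_ratio_eq hΔ h1] at H
  have key : (c / Δ) * (Real.exp u₂ + Real.exp (-u₂) - 2)
      ≤ lam * ((c / Δ) * (Real.exp u₁ + Real.exp (-u₁) - 2)) := by
    have hcd : 0 < c / Δ := by positivity
    nlinarith [c1, c2]
  have h3 : lam * (3 * u₁) = 3 * u₂ := by rw [← hlu]; ring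
  calc (c / Δ) * (Real.exp u₂ + Real.exp (-u₂) - 2)
      ≤ lam * ((c / Δ) * (Real.exp u₁ + Real.exp (-u₁) - 2)) := key
    _ ≤ lam * (3 * u₁) := by
        apply mul_le_mul_of_nonneg_left H hlam0
    _ = 3 * u₂ := h3

lemma levyPDF_lower_bound {c Δ t : ℝ} (hc : 0 < c) (hΔ : 0 < Δ) (h1 : Δ < t)
    (H : c / (t - Δ) - c / t ≤ 3 * (Real.log t - Real.log (t - Δ))) :
    Δ * Real.exp (6 * Δ / c) / (Real.exp (6 * Δ / c) - 1) ≤ t := by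
  have hs : 0 < t - Δ := by linarith
  have ht : 0 < t := by linarith
  obtain ⟨u, hu⟩ : ∃ u, u = Real.log t - Real.log (t - Δ) := ⟨_, rfl⟩
  rw [levyPDF_ratio_eq hΔ h1, ← hu] at H
  have hupos : 0 < u := by
    have := Real.log_lt_log hs (by linarith : t - Δ < t); linarith
  have hq : u ^ 2 / 2 ≤ Real.exp u + Real.exp (-u) - 2 := by
    have q1 := Real.quadratic_le_exp_of_nonneg hupos.le
    have q2 := Real.add_one_le_exp (-u)
    nlinarith
  have hcd : 0 < c / Δ := by positivity
  have hK : u ≤ 6 * Δ / c := by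
    have h2 : (c / Δ) * (u ^ 2 / 2) ≤ 3 * u :=
      (mul_le_mul_of_nonneg_left hq hcd.le).trans H
    have e : c / Δ * (u ^ 2 / 2) * Δ = c * (u ^ 2 / 2) := by field_simp
    have h2' : c * (u ^ 2 / 2) ≤ 3 * u * Δ := by
      have := mul_le_mul_of_nonneg_right h2 hΔ.le
      rw [e] at this; linarith
    rw [le_div_iff₀ hc]
    by_contra hcon
    push_neg at hcon
    have hx := mul_lt_mul_of_pos_left hcon hupos
    nlinarith
  have hexp : t / (t - Δ) ≤ Real.exp (6 * Δ / c) := by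
    have : Real.exp u = t / (t - Δ) := by
      rw [hu, Real.exp_sub, Real.exp_log ht, Real.exp_log hs]
    rw [← this]
    exact Real.exp_le_exp.mpr hK
  have hK1 : 0 < Real.exp (6 * Δ / c) - 1 := by
    have h6 : (0:ℝ) < 6 * Δ / c := by positivity
    have := Real.add_one_le_exp (6 * Δ / c)
    linarith
  rw [div_le_iff₀ hK1]
  rw [div_le_iff₀ hs] at hexp
  nlinarith [Real.exp_pos (6 * Δ / c)]

lemma levyPDF_upper_mem {c Δ : ℝ} (hc : 0 < c) (hΔ : 0 < Δ) :
    c / (c / 3 + Δ - Δ) - c / (c / 3 + Δ) ≤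
      3 * (Real.log (c / 3 + Δ) - Real.log (c / 3 + Δ - Δ)) := by
  have hsimp : c / 3 + Δ - Δ = c / 3 := by ring
  rw [hsimp]
  have h3 : (0:ℝ) < c / 3 := by positivity
  have h4 : (0:ℝ) < c / 3 + Δ := by positivity
  have hy : (0:ℝ) < (c / 3) / (c / 3 + Δ) := by positivity
  have hlog := Real.log_le_sub_one_of_pos hy
  rw [Real.log_div h3.ne' h4.ne'] at hlog
  have e1 : (c / 3) / (c / 3 + Δ) - 1 = -(Δ / (c / 3 + Δ)) := by field_simp; ring
  have e2 : c / (c / 3) - c / (c / 3 + Δ) = 3 * (Δ / (c / 3 + Δ)) := by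
    field_simp; ring
  rw [e2]
  linarith [hlog, e1]

/-- Existence of the ML threshold for system A: there is `th_A` with
`Δ < th_A ≤ c/3 + Δ` such that the likelihood under input 0 exceeds the likelihood
under input `Δ` exactly for outputs below `th_A`. -/
theorem systemA_threshold_exists (c Δ : ℝ) (hc : 0 < c) (hΔ : 0 < Δ) :
    ∃ thA : ℝ, Δ < thA ∧ thA ≤ c / 3 + Δ ∧
      (∀ t : ℝ, 0 < t → t < thA → levyPDF c t > levyPDF c (t - Δ)) ∧
      (∀ t : ℝ, thA ≤ t → levyPDF c t ≤ levyPDF c (t - Δ)) := by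
  set S : Set ℝ := {t : ℝ | Δ < t ∧
    c / (t - Δ) - c / t ≤ 3 * (Real.log t - Real.log (t - Δ))} with hS
  set L : ℝ := Δ * Real.exp (6 * Δ / c) / (Real.exp (6 * Δ / c) - 1) with hL
  have hLbd : ∀ t ∈ S, L ≤ t := fun t ht =>
    levyPDF_lower_bound hc hΔ ht.1 ht.2
  have hK1 : 0 < Real.exp (6 * Δ / c) - 1 := by
    have h6 : (0:ℝ) < 6 * Δ / c := by positivity
    have := Real.add_one_le_exp (6 * Δ / c)
    linarith
  have hLΔ : Δ < L := by
    rw [hL, lt_div_iff₀ hK1]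
    have := Real.exp_pos (6 * Δ / c)
    nlinarith
  have hmemU : (c / 3 + Δ) ∈ S :=
    ⟨by linarith, levyPDF_upper_mem hc hΔ⟩
  have hne : S.Nonempty := ⟨_, hmemU⟩
  have hbdd : BddBelow S := ⟨L, hLbd⟩
  set thA := sInf S with hthA
  have hth1 : Δ < thA := lt_of_lt_of_le hLΔ (le_csInf hne hLbd)
  have hth2 : thA ≤ c / 3 + Δ := csInf_le hbdd hmemU
  have hsA : 0 < thA - Δ := by linarith
  have htApos : 0 < thA := by linarith
  -- thA itself belongs to S, via continuity
  have hmem : thA ∈ S := by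
    refine ⟨hth1, ?_⟩
    by_contra hneg
    push_neg at hneg
    set F : ℝ → ℝ := fun t =>
      (c / (t - Δ) - c / t) - 3 * (Real.log t - Real.log (t - Δ)) with hF
    have hFpos : 0 < F thA := by simp only [hF]; linarith
    have hcont : ContinuousAt F thA := by
      have hsub : ContinuousAt (fun t : ℝ => t - Δ) thA :=
        continuousAt_id.sub continuousAt_const
      have c1 : ContinuousAt (fun t : ℝ => c / (t - Δ)) thA :=
        continuousAt_const.div hsub hsA.ne'
      have c2 : ContinuousAt (fun t : ℝ => c / t) thA :=
        continuousAt_const.div continuousAt_id htApos.ne'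
      have c3 : ContinuousAt (fun t : ℝ => Real.log t) thA :=
        Real.continuousAt_log htApos.ne'
      have c4 : ContinuousAt (fun t : ℝ => Real.log (t - Δ)) thA :=
        hsub.log hsA.ne'
      exact ((c1.sub c2).sub (continuousAt_const.mul (c3.sub c4)))
    have hev : ∀ᶠ y in nhds thA, 0 < F y :=
      hcont.eventually (eventually_gt_nhds hFpos)
    rw [Metric.eventually_nhds_iff] at hev
    obtain ⟨ε, hε, hball⟩ := hev
    have hlt : sInf S < thA + ε := by rw [← hthA]; linarith
    obtain ⟨s, hsS, hslt⟩ := (csInf_lt_iff hbdd hne).mp hlt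
    have hsge : thA ≤ s := csInf_le hbdd hsS
    have hdist : dist s thA < ε := by
      rw [Real.dist_eq, abs_lt]; constructor <;> linarith
    have := hball hdist
    have hcon := hsS.2
    simp only [hF] at this
    linarith
  refine ⟨thA, hth1, hth2, ?_, ?_⟩
  · intro t ht htlt
    by_cases hcase : Δ < t
    · have htnot : t ∉ S := fun hmem' => absurd (csInf_le hbdd hmem') (by linarith)
      have : ¬ (c / (t - Δ) - c / t ≤ 3 * (Real.log t - Real.log (t - Δ))) := by
        intro hcontra; exact htnot ⟨hcase, hcontra⟩
      have hst : 0 < t - Δ := by linarith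
      have := (not_iff_not.mpr (levyPDF_key_iff hc hst ht)).mpr this
      exact lt_of_not_ge this
    · push_neg at hcase
      have hzero : levyPDF c (t - Δ) = 0 := by
        rw [levyPDF, if_neg (by linarith : ¬ 0 < t - Δ)]
      rw [hzero]
      exact levyPDF_pos hc ht
  · intro t htge
    have htΔ : Δ < t := lt_of_lt_of_le hth1 htge
    have hst : 0 < t - Δ := by linarith
    have htpos : 0 < t := by linarith
    exact (levyPDF_key_iff hc hst htpos).mpr
      (levyPDF_mono_step hc hΔ hth1 htge hmem.2)
end
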